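/- arXiv:1204.6302 — 5 statements merged into one kernel-verified Lean document; each statement's English description precedes it below -/
import Mathlib

section
/- Let A be an n×n nonnegative real matrix with all row sums nonzero, and let M > 0, N ≥ 0, k ≥ 0 be integers such that A^{M+N} is irreducible. Then equality holds on either side (and hence both sides) of the bound min_{(i,j): a_{ij}^{(M)}>0} ( r_i(A^{k+M}) r_j(A^{k+N}) / (r_i(A^k) r_j(A^k)) )^{1/(M+N)} ≤ ρ(A) ≤ max_{(i,j): a_{ij}^{(M)}>0} ( r_i(A^{k+M}) r_j(A^{k+N}) / (r_i(A^k) r_j(A^k)) )^{1/(M+N)} if and only if r_i(A^{k+1}) / r_i(A^k) = ρ(A) for every i ∈ {1,…,n}. -/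
open Matrix

/-- The spectral radius of a real square matrix: the maximum modulus of its
complex eigenvalues (elements of the spectrum of the matrix over `ℂ`). -/
noncomputable def specRad {n : ℕ} (A : Matrix (Fin n) (Fin n) ℝ) : ℝ :=
  sSup ((fun μ : ℂ => ‖μ‖) '' spectrum ℂ (A.map (fun x : ℝ => (x : ℂ))))

/-- `rowSum A i` is the `i`-th row sum of `A`. -/
noncomputable def rowSum {n : ℕ} (A : Matrix (Fin n) (Fin n) ℝ) (i : Fin n) : ℝ :=
  ∑ j, A i j

/-- A square matrix is irreducible if it cannot be symmetrically permuted to a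
nontrivial block upper-triangular form; equivalently, for every nonempty proper
subset `S` of indices there is a nonzero entry leading from `S` to its complement. -/
def IsIrred {n : ℕ} (A : Matrix (Fin n) (Fin n) ℝ) : Prop :=
  ∀ S : Set (Fin n), S.Nonempty → S ≠ Set.univ → ∃ i ∈ S, ∃ j ∈ Sᶜ, A i j ≠ 0

namespace Stmt11Aux

variable {n : ℕ}

/-- entrywise nonnegativity of powers -/
lemma pow_entry_nonneg {A : Matrix (Fin n) (Fin n) ℝ} (hA : ∀ i j, 0 ≤ A i j) (m : ℕ) :
    ∀ i j, 0 ≤ (A ^ m) i j := by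
  induction m with
  | zero => intro i j; by_cases h : i = j <;> simp [pow_zero, Matrix.one_apply, h]
  | succ m ih =>
      intro i j
      rw [pow_succ, Matrix.mul_apply]
      exact Finset.sum_nonneg fun l _ => mul_nonneg (ih i l) (hA l j)

lemma mulVec_nonneg {A : Matrix (Fin n) (Fin n) ℝ} (hA : ∀ i j, 0 ≤ A i j)
    {w : Fin n → ℝ} (hw : ∀ i, 0 ≤ w i) : ∀ i, 0 ≤ (A *ᵥ w) i := by
  intro i
  simp only [Matrix.mulVec, dotProduct]
  exact Finset.sum_nonneg fun j _ => mul_nonneg (hA i j) (hw j)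

lemma mulVec_mono {A : Matrix (Fin n) (Fin n) ℝ} (hA : ∀ i j, 0 ≤ A i j)
    {u w : Fin n → ℝ} (h : ∀ i, u i ≤ w i) : ∀ i, (A *ᵥ u) i ≤ (A *ᵥ w) i := by
  intro i
  simp only [Matrix.mulVec, dotProduct]
  exact Finset.sum_le_sum fun j _ => mul_le_mul_of_nonneg_left (h j) (hA i j)

lemma exists_pos_entry {A : Matrix (Fin n) (Fin n) ℝ} (hA : ∀ i j, 0 ≤ A i j) {i : Fin n}
    (h : (∑ j, A i j) ≠ 0) : ∃ j, 0 < A i j := by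
  by_contra hc
  push_neg at hc
  exact h (Finset.sum_eq_zero fun j _ => le_antisymm (hc j) (hA i j))

lemma mulVec_pos {A : Matrix (Fin n) (Fin n) ℝ} (hA : ∀ i j, 0 ≤ A i j)
    (hr : ∀ i, (∑ j, A i j) ≠ 0) {w : Fin n → ℝ} (hw : ∀ i, 0 < w i) :
    ∀ i, 0 < (A *ᵥ w) i := by
  intro i
  obtain ⟨j0, hj0⟩ := exists_pos_entry hA (hr i)
  simp only [Matrix.mulVec, dotProduct]
  refine Finset.sum_pos' (fun j _ => mul_nonneg (hA i j) (hw j).le) ⟨j0, Finset.mem_univ _, ?_⟩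
  exact mul_pos hj0 (hw j0)

lemma pow_mulVec_pos {A : Matrix (Fin n) (Fin n) ℝ} (hA : ∀ i j, 0 ≤ A i j)
    (hr : ∀ i, (∑ j, A i j) ≠ 0) {w : Fin n → ℝ} (hw : ∀ i, 0 < w i) (m : ℕ) :
    ∀ i, 0 < ((A ^ m) *ᵥ w) i := by
  induction m with
  | zero => simpa [pow_zero] using hw
  | succ m ih =>
      intro i
      have : (A ^ (m + 1)) *ᵥ w = A *ᵥ ((A ^ m) *ᵥ w) := by
        rw [pow_succ', mulVec_mulVec]
      rw [this]
      exact mulVec_pos hA hr ih i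


section Spectrum

/-- complexification commutes with powers -/
lemma cmap_pow (A : Matrix (Fin n) (Fin n) ℝ) (m : ℕ) :
    (A ^ m).map (fun x : ℝ => (x : ℂ)) = (A.map (fun x : ℝ => (x : ℂ))) ^ m := by
  have h : (A.map (fun x : ℝ => (x : ℂ))) = Complex.ofRealHom.mapMatrix A := rfl
  have h2 : (A ^ m).map (fun x : ℝ => (x : ℂ)) = Complex.ofRealHom.mapMatrix (A ^ m) := rfl
  rw [h, h2, _root_.map_pow]

lemma mem_spectrum_iff {M : Matrix (Fin n) (Fin n) ℂ} {μ : ℂ} :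
    μ ∈ spectrum ℂ M ↔ ∃ z : Fin n → ℂ, z ≠ 0 ∧ M *ᵥ z = μ • z := by
  rw [spectrum.mem_iff, Matrix.isUnit_iff_isUnit_det, isUnit_iff_ne_zero, not_ne_iff,
    ← Matrix.exists_mulVec_eq_zero_iff]
  constructor
  · rintro ⟨z, hz, hzeq⟩
    refine ⟨z, hz, ?_⟩
    have : (algebraMap ℂ (Matrix (Fin n) (Fin n) ℂ)) μ *ᵥ z - M *ᵥ z = 0 := by
      rw [← Matrix.sub_mulVec]; exact hzeq
    have h2 : (algebraMap ℂ (Matrix (Fin n) (Fin n) ℂ)) μ *ᵥ z = μ • z := by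
      funext i
      simp [Matrix.algebraMap_eq_diagonal, Matrix.mulVec_diagonal]
    rw [h2, sub_eq_zero] at this
    exact this.symm
  · rintro ⟨z, hz, hzeq⟩
    refine ⟨z, hz, ?_⟩
    rw [Matrix.sub_mulVec]
    have h2 : (algebraMap ℂ (Matrix (Fin n) (Fin n) ℂ)) μ *ᵥ z = μ • z := by
      funext i
      simp [Matrix.algebraMap_eq_diagonal, Matrix.mulVec_diagonal]
    rw [h2, hzeq, sub_self]

lemma spectrum_nonempty (hn : n ≠ 0) (M : Matrix (Fin n) (Fin n) ℂ) :
    (spectrum ℂ M).Nonempty := by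
  haveI : NeZero n := ⟨hn⟩
  haveI : Nontrivial (Matrix (Fin n) (Fin n) ℂ) := by
    refine ⟨0, 1, fun h => ?_⟩
    have := congrFun (congrFun h 0) 0
    simp [Matrix.one_apply] at this
  exact spectrum.nonempty_of_isAlgClosed_of_finiteDimensional ℂ M

lemma spectrum_finite (M : Matrix (Fin n) (Fin n) ℂ) : (spectrum ℂ M).Finite :=
  Matrix.finite_spectrum M

lemma specRad_mem (hn : n ≠ 0) (A : Matrix (Fin n) (Fin n) ℝ) :
    specRad A ∈ (fun μ : ℂ => ‖μ‖) '' spectrum ℂ (A.map (fun x : ℝ => (x : ℂ))) :=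
  Set.Nonempty.csSup_mem ((spectrum_nonempty hn _).image _) ((spectrum_finite _).image _)

lemma abs_le_specRad {A : Matrix (Fin n) (Fin n) ℝ} {μ : ℂ}
    (hμ : μ ∈ spectrum ℂ (A.map (fun x : ℝ => (x : ℂ)))) : ‖μ‖ ≤ specRad A :=
  le_csSup ((spectrum_finite _).image _).bddAbove (Set.mem_image_of_mem _ hμ)

lemma specRad_nonneg (hn : n ≠ 0) (A : Matrix (Fin n) (Fin n) ℝ) : 0 ≤ specRad A := by
  obtain ⟨μ, -, h⟩ := specRad_mem hn A
  rw [← h]; exact norm_nonneg _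

/-- Collatz–Wielandt type upper bound -/
lemma specRad_le_of_mulVec_le {A : Matrix (Fin n) (Fin n) ℝ} (hA : ∀ i j, 0 ≤ A i j)
    {w : Fin n → ℝ} {c : ℝ} (hw : ∀ i, 0 < w i) (hc0 : 0 ≤ c)
    (hub : ∀ i, (A *ᵥ w) i ≤ c * w i) : specRad A ≤ c := by
  apply Real.sSup_le _ hc0
  rintro x ⟨μ, hμ, rfl⟩
  obtain ⟨z, hz0, hzeq⟩ := mem_spectrum_iff.mp hμ
  obtain ⟨iz, hiz⟩ : ∃ i, z i ≠ 0 := by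
    by_contra hcon; push_neg at hcon; exact hz0 (funext fun i => hcon i)
  obtain ⟨i0, -, hi0⟩ := Finset.exists_max_image Finset.univ
    (fun i => ‖z i‖ / w i) ⟨iz, Finset.mem_univ _⟩
  set c' := ‖z i0‖ / w i0 with hc'
  have hc'pos : 0 < c' := by
    have h1 : ‖z iz‖ / w iz ≤ c' := hi0 iz (Finset.mem_univ _)
    have h2 : 0 < ‖z iz‖ / w iz :=
      div_pos (norm_pos_iff.mpr hiz) (hw iz)
    linarith
  have hzi0 : 0 < ‖z i0‖ := by
    have := mul_pos hc'pos (hw i0)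
    rwa [hc', div_mul_cancel₀] at this
    exact (hw i0).ne'
  have hb : ∀ j, ‖z j‖ ≤ c' * w j := fun j => by
    have := hi0 j (Finset.mem_univ _)
    rwa [div_le_iff₀ (hw j)] at this
  have key : ‖μ‖ * ‖z i0‖ ≤ c * ‖z i0‖ := by
    have e1 : (A.map (fun x : ℝ => (x : ℂ)) *ᵥ z) i0 = μ * z i0 := by
      rw [hzeq]; simp
    calc ‖μ‖ * ‖z i0‖ = ‖μ * z i0‖ := (norm_mul _ _).symm
      _ = ‖(A.map (fun x : ℝ => (x : ℂ)) *ᵥ z) i0‖ := by rw [e1]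
      _ ≤ ∑ j, ‖(A i0 j : ℂ) * z j‖ := by
          simp only [Matrix.mulVec, dotProduct, Matrix.map_apply]
          exact norm_sum_le _ _
      _ = ∑ j, A i0 j * ‖z j‖ := by
          refine Finset.sum_congr rfl fun j _ => ?_
          rw [norm_mul, Complex.norm_real, Real.norm_eq_abs, abs_of_nonneg (hA i0 j)]
      _ ≤ ∑ j, A i0 j * (c' * w j) :=
          Finset.sum_le_sum fun j _ => mul_le_mul_of_nonneg_left (hb j) (hA i0 j)
      _ = c' * (A *ᵥ w) i0 := by
          simp only [Matrix.mulVec, dotProduct, Finset.mul_sum]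
          exact Finset.sum_congr rfl fun j _ => by ring
      _ ≤ c' * (c * w i0) := mul_le_mul_of_nonneg_left (hub i0) hc'pos.le
      _ = c * (c' * w i0) := by ring
      _ = c * ‖z i0‖ := by rw [hc', div_mul_cancel₀ _ (hw i0).ne']
  exact le_of_mul_le_mul_right key hzi0

/-- a positive eigenvector gives a lower bound on the spectral radius -/
lemma le_specRad_of_eigen (hn : n ≠ 0) {A : Matrix (Fin n) (Fin n) ℝ}
    {v : Fin n → ℝ} (hv : ∀ i, 0 < v i) {c : ℝ} (heq : A *ᵥ v = c • v) :
    c ≤ specRad A := by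
  haveI : NeZero n := ⟨hn⟩
  set z : Fin n → ℂ := fun i => ((v i : ℝ) : ℂ) with hzdef
  have hz0 : z ≠ 0 := by
    intro h
    have := congrFun h 0
    simp only [hzdef, Pi.zero_apply, Complex.ofReal_eq_zero] at this
    exact (hv 0).ne' this
  have hzeq : A.map (fun x : ℝ => (x : ℂ)) *ᵥ z = (c : ℂ) • z := by
    funext i
    have hre : (A *ᵥ v) i = c * v i := by rw [heq]; simp
    simp only [Matrix.mulVec, dotProduct, Matrix.map_apply, hzdef, Pi.smul_apply,
      smul_eq_mul]
    push_cast
    exact_mod_cast congrArg (fun x : ℝ => (x : ℂ)) hre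
  have hmem : (c : ℂ) ∈ spectrum ℂ (A.map (fun x : ℝ => (x : ℂ))) :=
    mem_spectrum_iff.mpr ⟨z, hz0, hzeq⟩
  calc c ≤ |c| := le_abs_self c
    _ = ‖((c : ℝ) : ℂ)‖ := by rw [Complex.norm_real, Real.norm_eq_abs]
    _ ≤ specRad A := abs_le_specRad hmem

/-- spectral radius of powers -/
lemma specRad_pow (hn : n ≠ 0) (A : Matrix (Fin n) (Fin n) ℝ) {p : ℕ} (hp : 0 < p) :
    specRad (A ^ p) = specRad A ^ p := by
  have hσ : spectrum ℂ ((A ^ p).map (fun x : ℝ => (x : ℂ)))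
      = (· ^ p) '' spectrum ℂ (A.map (fun x : ℝ => (x : ℂ))) := by
    rw [cmap_pow]
    exact spectrum.map_pow_of_pos _ hp
  obtain ⟨μ0, hμ0mem, hμ0⟩ := specRad_mem hn A
  have hub : ∀ x ∈ (fun μ : ℂ => ‖μ‖) ''
      spectrum ℂ ((A ^ p).map (fun x : ℝ => (x : ℂ))), x ≤ specRad A ^ p := by
    rintro x ⟨μ, hμ, rfl⟩
    rw [hσ] at hμ
    obtain ⟨ν, hν, rfl⟩ := hμ
    show ‖ν ^ p‖ ≤ _
    rw [norm_pow]
    exact pow_le_pow_left₀ (norm_nonneg _) (abs_le_specRad hν) p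
  have hmem : specRad A ^ p ∈ (fun μ : ℂ => ‖μ‖) ''
      spectrum ℂ ((A ^ p).map (fun x : ℝ => (x : ℂ))) := by
    rw [hσ]
    refine ⟨μ0 ^ p, Set.mem_image_of_mem _ hμ0mem, ?_⟩
    show ‖μ0 ^ p‖ = _
    rw [norm_pow, show ‖μ0‖ = specRad A from hμ0]
  exact le_antisymm
    (Real.sSup_le hub (pow_nonneg (specRad_nonneg hn A) p))
    (le_csSup ((spectrum_finite _).image _).bddAbove hmem)

end Spectrum

section Gelfand

attribute [local instance] Matrix.linftyOpNormedAddCommGroup Matrix.linftyOpNormedRing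
  Matrix.linftyOpNormedSpace Matrix.linftyOpNormedAlgebra

noncomputable local instance : CompleteSpace (Matrix (Fin n) (Fin n) ℂ) :=
  FiniteDimensional.complete ℂ (Matrix (Fin n) (Fin n) ℂ)

/-- Collatz–Wielandt type lower bound, via Gelfand's formula. -/
lemma le_specRad_of_le_mulVec (hn : n ≠ 0) {A : Matrix (Fin n) (Fin n) ℝ}
    (hA : ∀ i j, 0 ≤ A i j) {w : Fin n → ℝ} {c : ℝ} (hw : ∀ i, 0 < w i) (hc0 : 0 ≤ c)
    (hlb : ∀ i, c * w i ≤ (A *ᵥ w) i) : c ≤ specRad A := by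
  haveI : NeZero n := ⟨hn⟩
  -- max of w
  obtain ⟨imax, -, himax⟩ := Finset.exists_max_image Finset.univ w ⟨0, Finset.mem_univ _⟩
  set wmax := w imax with hwmax
  have hwmaxpos : 0 < wmax := hw imax
  set K := w 0 / wmax with hK
  have hKpos : 0 < K := div_pos (hw 0) hwmaxpos
  -- powers
  have hpow : ∀ m i, c ^ m * w i ≤ ((A ^ m) *ᵥ w) i := by
    intro m
    induction m with
    | zero => intro i; simp [pow_zero]
    | succ m ih =>
        intro i
        have h1 : (A ^ (m + 1)) *ᵥ w = (A ^ m) *ᵥ (A *ᵥ w) := by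
          rw [pow_succ, ← mulVec_mulVec]
        have h2 : ((A ^ m) *ᵥ (c • w)) i ≤ ((A ^ m) *ᵥ (A *ᵥ w)) i :=
          mulVec_mono (pow_entry_nonneg hA m) (fun j => hlb j) i
        have h3 : ((A ^ m) *ᵥ (c • w)) i = c * ((A ^ m) *ᵥ w) i := by
          rw [Matrix.mulVec_smul]; simp
        calc c ^ (m + 1) * w i = c * (c ^ m * w i) := by ring
          _ ≤ c * ((A ^ m) *ᵥ w) i := mul_le_mul_of_nonneg_left (ih i) hc0
          _ = ((A ^ m) *ᵥ (c • w)) i := h3.symm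
          _ ≤ ((A ^ m) *ᵥ (A *ᵥ w)) i := h2
          _ = ((A ^ (m + 1)) *ᵥ w) i := by rw [h1]
  -- row sums bound the norm from below
  set A' := A.map (fun x : ℝ => (x : ℂ)) with hA'
  have hnorm : ∀ m : ℕ, c ^ m * K ≤ ‖A' ^ m‖ := by
    intro m
    have hS : c ^ m * K ≤ ∑ j, (A ^ m) 0 j := by
      have h1 : c ^ m * w 0 ≤ ∑ j, (A ^ m) 0 j * w j := hpow m 0
      have h2 : ∑ j, (A ^ m) 0 j * w j ≤ (∑ j, (A ^ m) 0 j) * wmax := by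
        rw [Finset.sum_mul]
        exact Finset.sum_le_sum fun j _ => mul_le_mul_of_nonneg_left
          (himax j (Finset.mem_univ _)) (pow_entry_nonneg hA m 0 j)
      rw [hK, mul_comm (c ^ m), div_mul_eq_mul_div, div_le_iff₀ hwmaxpos, mul_comm (w 0)]
      linarith
    have hRS : (∑ j, (A ^ m) 0 j) ≤ ‖A' ^ m‖ := by
      have he : A' ^ m = (A ^ m).map (fun x : ℝ => (x : ℂ)) := (cmap_pow A m).symm
      have h3 : ∑ j, ‖(A' ^ m) 0 j‖₊ ≤ ‖A' ^ m‖₊ :=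
        Matrix.linfty_opNNNorm_def (A' ^ m) ▸
          Finset.le_sup (f := fun i => ∑ j, ‖(A' ^ m) i j‖₊) (Finset.mem_univ 0)
      have h4 : ((∑ j, ‖(A' ^ m) 0 j‖₊ : NNReal) : ℝ) = ∑ j, (A ^ m) 0 j := by
        push_cast
        refine Finset.sum_congr rfl fun j _ => ?_
        rw [he]
        show ‖(((A ^ m) 0 j : ℝ) : ℂ)‖ = (A ^ m) 0 j
        rw [Complex.norm_real, Real.norm_eq_abs, abs_of_nonneg (pow_entry_nonneg hA m 0 j)]
      calc (∑ j, (A ^ m) 0 j) = ((∑ j, ‖(A' ^ m) 0 j‖₊ : NNReal) : ℝ) := h4.symm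
        _ ≤ (‖A' ^ m‖₊ : ℝ) := by exact_mod_cast h3
        _ = ‖A' ^ m‖ := rfl
    linarith
  -- limits
  have hf := spectrum.pow_nnnorm_pow_one_div_tendsto_nhds_spectralRadius A'
  have hgle : ∀ᶠ m : ℕ in Filter.atTop,
      ENNReal.ofReal (c * K ^ (1 / (m : ℝ))) ≤ (‖A' ^ m‖₊ : ENNReal) ^ (1 / (m : ℝ)) := by
    filter_upwards [Filter.eventually_ge_atTop 1] with m hm
    have hm0 : (m : ℝ) ≠ 0 := Nat.cast_ne_zero.mpr (by omega)
    have hr1 : c * K ^ (1 / (m : ℝ)) = (c ^ m * K) ^ (1 / (m : ℝ)) := by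
      rw [Real.mul_rpow (pow_nonneg hc0 m) hKpos.le]
      congr 1
      rw [← Real.rpow_natCast c m, ← Real.rpow_mul hc0]
      rw [mul_one_div, div_self hm0, Real.rpow_one]
    have hr2 : (c ^ m * K) ^ (1 / (m : ℝ)) ≤ ‖A' ^ m‖ ^ (1 / (m : ℝ)) :=
      Real.rpow_le_rpow (mul_nonneg (pow_nonneg hc0 m) hKpos.le) (hnorm m)
        (by positivity)
    have hr3 : (‖A' ^ m‖₊ : ENNReal) ^ (1 / (m : ℝ)) = ENNReal.ofReal (‖A' ^ m‖ ^ (1 / (m : ℝ))) := by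
      rw [← ENNReal.ofReal_rpow_of_nonneg (norm_nonneg _) (by positivity : (0:ℝ) ≤ 1 / (m:ℝ)),
        ofReal_norm, enorm_eq_nnnorm]
    rw [hr3, hr1]
    exact ENNReal.ofReal_le_ofReal hr2
  have hg : Filter.Tendsto (fun m : ℕ => ENNReal.ofReal (c * K ^ (1 / (m : ℝ))))
      Filter.atTop (nhds (ENNReal.ofReal c)) := by
    have h1 : Filter.Tendsto (fun m : ℕ => (1 / (m : ℝ))) Filter.atTop (nhds 0) :=
      tendsto_one_div_atTop_nhds_zero_nat
    have h2 : Filter.Tendsto (fun x : ℝ => K ^ x) (nhds 0) (nhds 1) := by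
      simpa using (@Real.continuousAt_const_rpow K 0 hKpos.ne').tendsto
    have h3 : Filter.Tendsto (fun m : ℕ => c * K ^ (1 / (m : ℝ))) Filter.atTop (nhds c) := by
      have := (h2.comp h1).const_mul c
      simpa using this
    exact (ENNReal.continuous_ofReal.continuousAt.tendsto).comp h3
  have hle : ENNReal.ofReal c ≤ spectralRadius ℂ A' :=
    le_of_tendsto_of_tendsto hg hf hgle
  -- relate spectralRadius to specRad
  have hsr : spectralRadius ℂ A' ≤ ENNReal.ofReal (specRad A) := by
    rw [spectralRadius]
    refine iSup₂_le fun μ hμ => ?_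
    rw [← enorm_eq_nnnorm, ← ofReal_norm]
    exact ENNReal.ofReal_le_ofReal (abs_le_specRad hμ)
  exact (ENNReal.ofReal_le_ofReal_iff (specRad_nonneg hn A)).mp (hle.trans hsr)

end Gelfand

section Key

/-- subinvariance: for an irreducible nonnegative matrix, `B v ≤ ρ v` forces equality -/
lemma subinvariant_eq (hn : n ≠ 0) {B : Matrix (Fin n) (Fin n) ℝ} (hB : ∀ i j, 0 ≤ B i j)
    (hirr : IsIrred B) {v : Fin n → ℝ} (hv : ∀ i, 0 < v i) (hρ : 0 < specRad B)
    (hle : ∀ i, (B *ᵥ v) i ≤ specRad B * v i) : ∀ i, (B *ᵥ v) i = specRad B * v i := by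
  haveI : NeZero n := ⟨hn⟩
  set ρ := specRad B with hρdef
  by_contra hcon
  push_neg at hcon
  obtain ⟨i0, hi0⟩ := hcon
  have hi0lt : (B *ᵥ v) i0 < ρ * v i0 := lt_of_le_of_ne (hle i0) hi0
  have hpowle : ∀ m i, ((B ^ m) *ᵥ v) i ≤ ρ ^ m * v i := by
    intro m
    induction m with
    | zero => intro i; simp [pow_zero]
    | succ m ih =>
        intro i
        have h1 : (B ^ (m + 1)) *ᵥ v = (B ^ m) *ᵥ (B *ᵥ v) := by
          rw [pow_succ, ← mulVec_mulVec]
        have h2 : ((B ^ m) *ᵥ (B *ᵥ v)) i ≤ ((B ^ m) *ᵥ (ρ • v)) i :=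
          mulVec_mono (pow_entry_nonneg hB m) (fun j => hle j) i
        have h3 : ((B ^ m) *ᵥ (ρ • v)) i = ρ * ((B ^ m) *ᵥ v) i := by
          rw [Matrix.mulVec_smul]; simp
        calc ((B ^ (m + 1)) *ᵥ v) i ≤ ρ * ((B ^ m) *ᵥ v) i := by rw [h1, ← h3]; exact h2
          _ ≤ ρ * (ρ ^ m * v i) := mul_le_mul_of_nonneg_left (ih i) hρ.le
          _ = ρ ^ (m + 1) * v i := by ring
  set T : ℕ → Finset (Fin n) :=
    fun m => Finset.univ.filter (fun i => ((B ^ m) *ᵥ v) i < ρ ^ m * v i) with hT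
  have hT1 : i0 ∈ T 1 := by
    simp only [hT, Finset.mem_filter, Finset.mem_univ, true_and, pow_one]
    simpa using hi0lt
  have hmono : ∀ m, T m ⊆ T (m + 1) := by
    intro m i hi
    simp only [hT, Finset.mem_filter, Finset.mem_univ, true_and] at hi ⊢
    have h1 : (B ^ (m + 1)) *ᵥ v = (B ^ m) *ᵥ (B *ᵥ v) := by
      rw [pow_succ, ← mulVec_mulVec]
    have h2 : ((B ^ m) *ᵥ (B *ᵥ v)) i ≤ ((B ^ m) *ᵥ (ρ • v)) i :=
      mulVec_mono (pow_entry_nonneg hB m) (fun j => hle j) i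
    have h3 : ((B ^ m) *ᵥ (ρ • v)) i = ρ * ((B ^ m) *ᵥ v) i := by
      rw [Matrix.mulVec_smul]; simp
    calc ((B ^ (m + 1)) *ᵥ v) i ≤ ρ * ((B ^ m) *ᵥ v) i := by rw [h1, ← h3]; exact h2
      _ < ρ * (ρ ^ m * v i) := by exact mul_lt_mul_of_pos_left hi hρ
      _ = ρ ^ (m + 1) * v i := by ring
  have hTne : ∀ m, 1 ≤ m → (T m).Nonempty := by
    intro m hm
    induction m with
    | zero => omega
    | succ m ih =>
        rcases Nat.eq_or_lt_of_le hm with h | h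
        · exact ⟨i0, by rw [← h]; exact hT1⟩
        · exact ((ih (by omega)).mono (hmono m))
  have hgrow : ∀ m, 1 ≤ m → T m ≠ Finset.univ → ∃ i, i ∉ T m ∧ i ∈ T (m + 1) := by
    intro m hm hne
    obtain ⟨a, ha⟩ : ∃ i, i ∉ T m := by
      by_contra h; push_neg at h; exact hne (Finset.eq_univ_iff_forall.mpr h)
    obtain ⟨b, hb⟩ := hTne m hm
    obtain ⟨i, hiS, j, hjS, hBij⟩ := hirr ((↑(T m) : Set (Fin n))ᶜ)
      ⟨a, by simpa using ha⟩
      (fun h => by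
        have : b ∈ ((↑(T m) : Set (Fin n))ᶜ) := h ▸ Set.mem_univ b
        exact this (by simpa using hb))
    have hiT : i ∉ T m := by simpa using hiS
    have hjT : j ∈ T m := by
      rw [compl_compl] at hjS; simpa using hjS
    have hBijpos : 0 < B i j := lt_of_le_of_ne (hB i j) (Ne.symm hBij)
    refine ⟨i, hiT, ?_⟩
    simp only [hT, Finset.mem_filter, Finset.mem_univ, true_and] at hjT ⊢
    have h1 : (B ^ (m + 1)) *ᵥ v = B *ᵥ ((B ^ m) *ᵥ v) := by
      rw [pow_succ', ← mulVec_mulVec]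
    set u := (B ^ m) *ᵥ v with hu
    have h2 : (B *ᵥ u) i < ρ ^ m * ((B *ᵥ v) i) := by
      simp only [Matrix.mulVec, dotProduct, Finset.mul_sum]
      refine Finset.sum_lt_sum (fun l _ => ?_) ⟨j, Finset.mem_univ _, ?_⟩
      · calc B i l * u l ≤ B i l * (ρ ^ m * v l) :=
              mul_le_mul_of_nonneg_left (hu ▸ hpowle m l) (hB i l)
          _ = ρ ^ m * (B i l * v l) := by ring
      · calc B i j * u j < B i j * (ρ ^ m * v j) :=
              mul_lt_mul_of_pos_left hjT hBijpos
          _ = ρ ^ m * (B i j * v j) := by ring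
    calc ((B ^ (m + 1)) *ᵥ v) i = (B *ᵥ u) i := by rw [h1]
      _ < ρ ^ m * ((B *ᵥ v) i) := h2
      _ ≤ ρ ^ m * (ρ * v i) := mul_le_mul_of_nonneg_left (hle i) (pow_nonneg hρ.le m)
      _ = ρ ^ (m + 1) * v i := by ring
  have hcard : ∀ m, 1 ≤ m → m ≤ (T m).card ∨ T m = Finset.univ := by
    intro m hm
    induction m with
    | zero => omega
    | succ m ih =>
        rcases Nat.eq_or_lt_of_le hm with h | h
        · left
          have := Finset.card_pos.mpr (hTne (m + 1) hm)
          omega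
        · have hm1 : 1 ≤ m := by omega
          rcases ih hm1 with hc | hu
          · by_cases he : T (m + 1) = Finset.univ
            · right; exact he
            · have hne : T m ≠ Finset.univ := fun h => he
                (Finset.univ_subset_iff.mp (h ▸ hmono m))
              obtain ⟨i, hiT, hiT1⟩ := hgrow m hm1 hne
              left
              have hsub : insert i (T m) ⊆ T (m + 1) :=
                Finset.insert_subset hiT1 (hmono m)
              have := Finset.card_le_card hsub
              rw [Finset.card_insert_of_notMem hiT] at this
              omega
          · right
            exact Finset.univ_subset_iff.mp (hu ▸ hmono m)
  have hall : ∀ i, ((B ^ (n + 1)) *ᵥ v) i < ρ ^ (n + 1) * v i := by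
    rcases hcard (n + 1) (by omega) with hc | hu
    · exfalso
      have := Finset.card_le_univ (T (n + 1))
      simp only [Finset.card_univ, Fintype.card_fin] at this
      omega
    · intro i
      have : i ∈ T (n + 1) := hu ▸ Finset.mem_univ i
      simpa [hT] using this
  obtain ⟨i1, -, hi1⟩ := Finset.exists_max_image Finset.univ
    (fun i => ((B ^ (n + 1)) *ᵥ v) i / v i) ⟨0, Finset.mem_univ _⟩
  set c := ((B ^ (n + 1)) *ᵥ v) i1 / v i1 with hc
  have hcle : ∀ i, ((B ^ (n + 1)) *ᵥ v) i ≤ c * v i := fun i =>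
    (div_le_iff₀ (hv i)).mp (hi1 i (Finset.mem_univ _))
  have hc0 : 0 ≤ c := by
    have h0 : 0 ≤ ((B ^ (n + 1)) *ᵥ v) 0 / v 0 :=
      div_nonneg (mulVec_nonneg (pow_entry_nonneg hB (n + 1)) (fun i => (hv i).le) 0)
        (hv 0).le
    exact le_trans h0 (hi1 0 (Finset.mem_univ _))
  have hclt : c < ρ ^ (n + 1) := by
    rw [hc, div_lt_iff₀ (hv i1)]
    calc ((B ^ (n + 1)) *ᵥ v) i1 < ρ ^ (n + 1) * v i1 := hall i1
      _ = ρ ^ (n + 1) * v i1 := rfl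
  have h := specRad_le_of_mulVec_le (pow_entry_nonneg hB (n + 1)) hv hc0 hcle
  rw [specRad_pow hn B (Nat.succ_pos n)] at h
  exact absurd (h.trans_lt hclt) (lt_irrefl _)

/-- superinvariance: for an irreducible nonnegative matrix, `B v ≥ ρ v` forces equality -/
lemma superinvariant_eq (hn : n ≠ 0) {B : Matrix (Fin n) (Fin n) ℝ} (hB : ∀ i j, 0 ≤ B i j)
    (hirr : IsIrred B) {v : Fin n → ℝ} (hv : ∀ i, 0 < v i) (hρ : 0 < specRad B)
    (hle : ∀ i, specRad B * v i ≤ (B *ᵥ v) i) : ∀ i, (B *ᵥ v) i = specRad B * v i := by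
  haveI : NeZero n := ⟨hn⟩
  set ρ := specRad B with hρdef
  by_contra hcon
  push_neg at hcon
  obtain ⟨i0, hi0⟩ := hcon
  have hi0lt : ρ * v i0 < (B *ᵥ v) i0 := lt_of_le_of_ne (hle i0) (Ne.symm hi0)
  have hpowle : ∀ m i, ρ ^ m * v i ≤ ((B ^ m) *ᵥ v) i := by
    intro m
    induction m with
    | zero => intro i; simp [pow_zero]
    | succ m ih =>
        intro i
        have h1 : (B ^ (m + 1)) *ᵥ v = (B ^ m) *ᵥ (B *ᵥ v) := by
          rw [pow_succ, ← mulVec_mulVec]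
        have h2 : ((B ^ m) *ᵥ (ρ • v)) i ≤ ((B ^ m) *ᵥ (B *ᵥ v)) i :=
          mulVec_mono (pow_entry_nonneg hB m) (fun j => hle j) i
        have h3 : ((B ^ m) *ᵥ (ρ • v)) i = ρ * ((B ^ m) *ᵥ v) i := by
          rw [Matrix.mulVec_smul]; simp
        calc ρ ^ (m + 1) * v i = ρ * (ρ ^ m * v i) := by ring
          _ ≤ ρ * ((B ^ m) *ᵥ v) i := mul_le_mul_of_nonneg_left (ih i) hρ.le
          _ = ((B ^ m) *ᵥ (ρ • v)) i := h3.symm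
          _ ≤ ((B ^ m) *ᵥ (B *ᵥ v)) i := h2
          _ = ((B ^ (m + 1)) *ᵥ v) i := by rw [h1]
  set T : ℕ → Finset (Fin n) :=
    fun m => Finset.univ.filter (fun i => ρ ^ m * v i < ((B ^ m) *ᵥ v) i) with hT
  have hT1 : i0 ∈ T 1 := by
    simp only [hT, Finset.mem_filter, Finset.mem_univ, true_and, pow_one]
    simpa using hi0lt
  have hmono : ∀ m, T m ⊆ T (m + 1) := by
    intro m i hi
    simp only [hT, Finset.mem_filter, Finset.mem_univ, true_and] at hi ⊢
    have h1 : (B ^ (m + 1)) *ᵥ v = (B ^ m) *ᵥ (B *ᵥ v) := by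
      rw [pow_succ, ← mulVec_mulVec]
    have h2 : ((B ^ m) *ᵥ (ρ • v)) i ≤ ((B ^ m) *ᵥ (B *ᵥ v)) i :=
      mulVec_mono (pow_entry_nonneg hB m) (fun j => hle j) i
    have h3 : ((B ^ m) *ᵥ (ρ • v)) i = ρ * ((B ^ m) *ᵥ v) i := by
      rw [Matrix.mulVec_smul]; simp
    calc ρ ^ (m + 1) * v i = ρ * (ρ ^ m * v i) := by ring
      _ < ρ * ((B ^ m) *ᵥ v) i := mul_lt_mul_of_pos_left hi hρ
      _ = ((B ^ m) *ᵥ (ρ • v)) i := h3.symm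
      _ ≤ ((B ^ m) *ᵥ (B *ᵥ v)) i := h2
      _ = ((B ^ (m + 1)) *ᵥ v) i := by rw [h1]
  have hTne : ∀ m, 1 ≤ m → (T m).Nonempty := by
    intro m hm
    induction m with
    | zero => omega
    | succ m ih =>
        rcases Nat.eq_or_lt_of_le hm with h | h
        · exact ⟨i0, by rw [← h]; exact hT1⟩
        · exact ((ih (by omega)).mono (hmono m))
  have hgrow : ∀ m, 1 ≤ m → T m ≠ Finset.univ → ∃ i, i ∉ T m ∧ i ∈ T (m + 1) := by
    intro m hm hne
    obtain ⟨a, ha⟩ : ∃ i, i ∉ T m := by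
      by_contra h; push_neg at h; exact hne (Finset.eq_univ_iff_forall.mpr h)
    obtain ⟨b, hb⟩ := hTne m hm
    obtain ⟨i, hiS, j, hjS, hBij⟩ := hirr ((↑(T m) : Set (Fin n))ᶜ)
      ⟨a, by simpa using ha⟩
      (fun h => by
        have : b ∈ ((↑(T m) : Set (Fin n))ᶜ) := h ▸ Set.mem_univ b
        exact this (by simpa using hb))
    have hiT : i ∉ T m := by simpa using hiS
    have hjT : j ∈ T m := by
      rw [compl_compl] at hjS; simpa using hjS
    have hBijpos : 0 < B i j := lt_of_le_of_ne (hB i j) (Ne.symm hBij)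
    refine ⟨i, hiT, ?_⟩
    simp only [hT, Finset.mem_filter, Finset.mem_univ, true_and] at hjT ⊢
    have h1 : (B ^ (m + 1)) *ᵥ v = B *ᵥ ((B ^ m) *ᵥ v) := by
      rw [pow_succ', ← mulVec_mulVec]
    set u := (B ^ m) *ᵥ v with hu
    have h2 : ρ ^ m * ((B *ᵥ v) i) < (B *ᵥ u) i := by
      simp only [Matrix.mulVec, dotProduct, Finset.mul_sum]
      refine Finset.sum_lt_sum (fun l _ => ?_) ⟨j, Finset.mem_univ _, ?_⟩
      · calc ρ ^ m * (B i l * v l) = B i l * (ρ ^ m * v l) := by ring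
          _ ≤ B i l * u l := mul_le_mul_of_nonneg_left (hu ▸ hpowle m l) (hB i l)
      · calc ρ ^ m * (B i j * v j) = B i j * (ρ ^ m * v j) := by ring
          _ < B i j * u j := mul_lt_mul_of_pos_left hjT hBijpos
    calc ρ ^ (m + 1) * v i = ρ ^ m * (ρ * v i) := by ring
      _ ≤ ρ ^ m * ((B *ᵥ v) i) := mul_le_mul_of_nonneg_left (hle i) (pow_nonneg hρ.le m)
      _ < (B *ᵥ u) i := h2
      _ = ((B ^ (m + 1)) *ᵥ v) i := by rw [h1]
  have hcard : ∀ m, 1 ≤ m → m ≤ (T m).card ∨ T m = Finset.univ := by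
    intro m hm
    induction m with
    | zero => omega
    | succ m ih =>
        rcases Nat.eq_or_lt_of_le hm with h | h
        · left
          have := Finset.card_pos.mpr (hTne (m + 1) hm)
          omega
        · have hm1 : 1 ≤ m := by omega
          rcases ih hm1 with hc | hu
          · by_cases he : T (m + 1) = Finset.univ
            · right; exact he
            · have hne : T m ≠ Finset.univ := fun h => he
                (Finset.univ_subset_iff.mp (h ▸ hmono m))
              obtain ⟨i, hiT, hiT1⟩ := hgrow m hm1 hne
              left
              have hsub : insert i (T m) ⊆ T (m + 1) :=
                Finset.insert_subset hiT1 (hmono m)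
              have := Finset.card_le_card hsub
              rw [Finset.card_insert_of_notMem hiT] at this
              omega
          · right
            exact Finset.univ_subset_iff.mp (hu ▸ hmono m)
  have hall : ∀ i, ρ ^ (n + 1) * v i < ((B ^ (n + 1)) *ᵥ v) i := by
    rcases hcard (n + 1) (by omega) with hc | hu
    · exfalso
      have := Finset.card_le_univ (T (n + 1))
      simp only [Finset.card_univ, Fintype.card_fin] at this
      omega
    · intro i
      have : i ∈ T (n + 1) := hu ▸ Finset.mem_univ i
      simpa [hT] using this
  obtain ⟨i1, -, hi1⟩ := Finset.exists_min_image Finset.univ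
    (fun i => ((B ^ (n + 1)) *ᵥ v) i / v i) ⟨0, Finset.mem_univ _⟩
  set c := ((B ^ (n + 1)) *ᵥ v) i1 / v i1 with hc
  have hcle : ∀ i, c * v i ≤ ((B ^ (n + 1)) *ᵥ v) i := fun i =>
    (le_div_iff₀ (hv i)).mp (hi1 i (Finset.mem_univ _))
  have hclt : ρ ^ (n + 1) < c := by
    rw [hc, lt_div_iff₀ (hv i1)]
    exact hall i1
  have hc0 : 0 ≤ c := le_trans (pow_nonneg hρ.le (n + 1)) hclt.le
  have h := le_specRad_of_le_mulVec hn (pow_entry_nonneg hB (n + 1)) hv hc0 hcle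
  rw [specRad_pow hn B (Nat.succ_pos n)] at h
  exact absurd (hclt.trans_le h) (lt_irrefl _)

/-- uniqueness of positive eigenvectors for an irreducible nonnegative matrix -/
lemma eig_unique (hn : n ≠ 0) {B : Matrix (Fin n) (Fin n) ℝ} (hB : ∀ i j, 0 ≤ B i j)
    (hirr : IsIrred B) {v u : Fin n → ℝ} (hv : ∀ i, 0 < v i) (hu : ∀ i, 0 < u i)
    {ρ : ℝ} (hBv : B *ᵥ v = ρ • v) (hBu : B *ᵥ u = ρ • u) :
    ∃ c : ℝ, 0 < c ∧ u = c • v := by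
  haveI : NeZero n := ⟨hn⟩
  obtain ⟨i1, -, hi1⟩ := Finset.exists_min_image Finset.univ
    (fun i => u i / v i) ⟨0, Finset.mem_univ _⟩
  set c := u i1 / v i1 with hc
  have hcpos : 0 < c := div_pos (hu i1) (hv i1)
  refine ⟨c, hcpos, ?_⟩
  set w : Fin n → ℝ := fun i => u i - c * v i with hw
  have hw0 : ∀ i, 0 ≤ w i := fun i => by
    have := hi1 i (Finset.mem_univ _)
    rw [hc] at this
    have := (le_div_iff₀ (hv i)).mp this
    simp only [hw]; linarith
  have hwi1 : w i1 = 0 := by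
    simp only [hw, hc]
    rw [div_mul_cancel₀ _ (hv i1).ne']
    ring
  have hBw : B *ᵥ w = ρ • w := by
    have : (fun i => u i - c * v i) = u - c • v := by funext i; simp
    rw [hw, this, Matrix.mulVec_sub, Matrix.mulVec_smul, hBv, hBu]
    funext i
    simp
    ring
  by_cases hwz : ∀ i, w i = 0
  · funext i
    have := hwz i
    simp only [hw] at this
    simp only [Pi.smul_apply, smul_eq_mul]
    linarith
  · exfalso
    push_neg at hwz
    obtain ⟨j0, hj0⟩ := hwz
    have hj0pos : 0 < w j0 := lt_of_le_of_ne (hw0 j0) (Ne.symm hj0)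
    obtain ⟨i, hiS, j, hjS, hBij⟩ := hirr {i | w i = 0}
      ⟨i1, hwi1⟩
      (fun h => hj0 (by
        have : j0 ∈ {i | w i = 0} := h ▸ Set.mem_univ j0
        exact this))
    have hwi : w i = 0 := hiS
    have hwj : 0 < w j := lt_of_le_of_ne (hw0 j) (Ne.symm hjS)
    have h1 : (B *ᵥ w) i = 0 := by
      have := congrFun hBw i
      simp only [Pi.smul_apply, smul_eq_mul] at this
      rw [this, hwi, mul_zero]
    have h2 : 0 < (B *ᵥ w) i := by
      simp only [Matrix.mulVec, dotProduct]
      refine Finset.sum_pos' (fun l _ => mul_nonneg (hB i l) (hw0 l))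
        ⟨j, Finset.mem_univ _, mul_pos (lt_of_le_of_ne (hB i j) (Ne.symm hBij)) hwj⟩
    rw [h1] at h2
    exact lt_irrefl 0 h2

end Key

section Main

lemma rowSum_mulVec_one (A : Matrix (Fin n) (Fin n) ℝ) (m : ℕ) (i : Fin n) :
    rowSum (A ^ m) i = ((A ^ m) *ᵥ (fun _ => (1:ℝ))) i := by
  simp [rowSum, Matrix.mulVec, dotProduct]

lemma rowSum_pow_pos {A : Matrix (Fin n) (Fin n) ℝ} (hA : ∀ i j, 0 ≤ A i j)
    (hr : ∀ i, (∑ j, A i j) ≠ 0) (m : ℕ) (i : Fin n) : 0 < rowSum (A ^ m) i := by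
  rw [rowSum_mulVec_one]
  exact pow_mulVec_pos hA hr (fun _ => one_pos) m i

lemma rowSum_add (A : Matrix (Fin n) (Fin n) ℝ) (l m : ℕ) (i : Fin n) :
    rowSum (A ^ (l + m)) i = ((A ^ m) *ᵥ (fun j => rowSum (A ^ l) j)) i := by
  rw [rowSum_mulVec_one, add_comm, pow_add, ← mulVec_mulVec]
  congr 1
  funext j
  rw [← rowSum_mulVec_one]

lemma conclude (hn : n ≠ 0) {A : Matrix (Fin n) (Fin n) ℝ} (hA : ∀ i j, 0 ≤ A i j)
    (hr : ∀ i, (∑ j, A i j) ≠ 0) {M N k : ℕ}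
    (hirr : IsIrred (A ^ (M + N)))
    (heq : ∀ i, ((A ^ (M + N)) *ᵥ (fun j => rowSum (A ^ k) j)) i
        = specRad A ^ (M + N) * rowSum (A ^ k) i) :
    ∀ i, rowSum (A ^ (k + 1)) i / rowSum (A ^ k) i = specRad A := by
  haveI : NeZero n := ⟨hn⟩
  set ρ := specRad A with hρdef
  set v : Fin n → ℝ := fun j => rowSum (A ^ k) j with hvdef
  have hvpos : ∀ i, 0 < v i := fun i => rowSum_pow_pos hA hr k i
  have hupos : ∀ i, 0 < (A *ᵥ v) i := mulVec_pos hA hr hvpos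
  have hBv : (A ^ (M + N)) *ᵥ v = ρ ^ (M + N) • v := by
    funext i
    rw [heq i]; simp [hvdef]
  have hBu : (A ^ (M + N)) *ᵥ (A *ᵥ v) = ρ ^ (M + N) • (A *ᵥ v) := by
    rw [mulVec_mulVec, ← pow_succ, pow_succ', ← mulVec_mulVec, hBv,
      Matrix.mulVec_smul]
  obtain ⟨c, hcpos, hceq⟩ :=
    eig_unique hn (pow_entry_nonneg hA (M + N)) hirr hvpos hupos hBv hBu
  have hAv : A *ᵥ v = c • v := hceq
  have h1 : ρ ≤ c := by
    refine specRad_le_of_mulVec_le hA hvpos hcpos.le fun i => ?_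
    rw [hAv]; simp
  have h2 : c ≤ ρ := le_specRad_of_eigen hn hvpos hAv
  have hcρ : c = ρ := le_antisymm h2 h1
  intro i
  have hks : rowSum (A ^ (k + 1)) i = (A *ᵥ v) i := by
    have := rowSum_add A k 1 i
    rwa [pow_one] at this
  rw [hks, hAv]
  simp only [Pi.smul_apply, smul_eq_mul]
  rw [mul_div_assoc, div_self (hvpos i).ne', mul_one, hcρ]

lemma set_eq_of_ratios (hn : n ≠ 0) {A : Matrix (Fin n) (Fin n) ℝ} (hA : ∀ i j, 0 ≤ A i j)
    (hr : ∀ i, (∑ j, A i j) ≠ 0) {M N k : ℕ} (hM : 0 < M)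
    (hrat : ∀ i, rowSum (A ^ (k + 1)) i / rowSum (A ^ k) i = specRad A) :
    {x : ℝ | ∃ i j : Fin n, 0 < (A ^ M) i j ∧
        x = (rowSum (A ^ (k + M)) i * rowSum (A ^ (k + N)) j /
              (rowSum (A ^ k) i * rowSum (A ^ k) j)) ^ (((M : ℝ) + N))⁻¹}
      = {specRad A} := by
  haveI : NeZero n := ⟨hn⟩
  set ρ := specRad A with hρdef
  set v : Fin n → ℝ := fun j => rowSum (A ^ k) j with hvdef
  have hvpos : ∀ i, 0 < v i := fun i => rowSum_pow_pos hA hr k i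
  have hAv : A *ᵥ v = ρ • v := by
    funext i
    have h1 : rowSum (A ^ (k + 1)) i = (A *ᵥ v) i := by
      have := rowSum_add A k 1 i
      rwa [pow_one] at this
    have h2 := hrat i
    rw [h1, div_eq_iff (hvpos i).ne'] at h2
    simp only [Pi.smul_apply, smul_eq_mul]
    exact h2
  have hρpos : 0 < ρ := by
    have h0 : 0 < (A *ᵥ v) 0 := mulVec_pos hA hr hvpos 0
    rw [hAv] at h0
    simp only [Pi.smul_apply, smul_eq_mul] at h0
    rcases mul_pos_iff.mp h0 with h | h
    · exact h.1
    · exact absurd (hvpos 0) (not_lt.mpr h.2.le)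
  have hpow : ∀ m, (A ^ m) *ᵥ v = ρ ^ m • v := by
    intro m
    induction m with
    | zero => simp [pow_zero]
    | succ m ih =>
        rw [pow_succ, ← mulVec_mulVec, hAv, Matrix.mulVec_smul, ih, smul_smul]
        rw [show ρ * ρ ^ m = ρ ^ (m + 1) by ring]
  have hMN0 : ((M : ℝ) + N) ≠ 0 := by positivity
  have hrs : ∀ (m : ℕ) (i : Fin n), rowSum (A ^ (k + m)) i = ρ ^ m * v i := by
    intro m i
    rw [rowSum_add A k m i, hpow m]
    simp [hvdef]
  have hval : ∀ i j : Fin n,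
      (rowSum (A ^ (k + M)) i * rowSum (A ^ (k + N)) j /
        (rowSum (A ^ k) i * rowSum (A ^ k) j)) ^ (((M : ℝ) + N))⁻¹ = ρ := by
    intro i j
    have hbase : rowSum (A ^ (k + M)) i * rowSum (A ^ (k + N)) j /
        (rowSum (A ^ k) i * rowSum (A ^ k) j) = ρ ^ (M + N) := by
      rw [hrs M i, hrs N j]
      have hvi : rowSum (A ^ k) i = v i := rfl
      have hvj : rowSum (A ^ k) j = v j := rfl
      rw [hvi, hvj, pow_add,
        div_eq_iff (mul_pos (hvpos i) (hvpos j)).ne']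
      ring
    rw [hbase, ← Real.rpow_natCast ρ (M + N), ← Real.rpow_mul hρpos.le]
    push_cast
    rw [mul_inv_cancel₀ hMN0, Real.rpow_one]
  ext x
  simp only [Set.mem_setOf_eq, Set.mem_singleton_iff]
  constructor
  · rintro ⟨i, j, -, rfl⟩
    exact hval i j
  · rintro rfl
    obtain ⟨j0, hj0⟩ : ∃ j, 0 < (A ^ M) 0 j := by
      refine exists_pos_entry (pow_entry_nonneg hA M) ?_
      have := rowSum_pow_pos hA hr M 0
      rw [rowSum] at this
      exact this.ne'
    exact ⟨0, j0, hj0, (hval 0 j0).symm⟩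

lemma mulVec_le_of_pairs (hn : n ≠ 0) {A : Matrix (Fin n) (Fin n) ℝ} (hA : ∀ i j, 0 ≤ A i j)
    (hr : ∀ i, (∑ j, A i j) ≠ 0) {M N k : ℕ}
    (hpair : ∀ i j, 0 < (A ^ M) i j →
      rowSum (A ^ (k + M)) i * rowSum (A ^ (k + N)) j ≤
        specRad A ^ (M + N) * (rowSum (A ^ k) i * rowSum (A ^ k) j)) :
    ∀ i, ((A ^ (M + N)) *ᵥ (fun j => rowSum (A ^ k) j)) i ≤
      specRad A ^ (M + N) * rowSum (A ^ k) i := by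
  intro i
  set ρ := specRad A with hρdef
  set v : Fin n → ℝ := fun j => rowSum (A ^ k) j with hvdef
  have hvpos : ∀ l, 0 < v l := fun l => rowSum_pow_pos hA hr k l
  set u2 : Fin n → ℝ := (A ^ N) *ᵥ v with hu2def
  set D : ℝ := ((A ^ M) *ᵥ v) i with hDdef
  have hD : 0 < D := pow_mulVec_pos hA hr hvpos M i
  set t : ℝ := ρ ^ (M + N) with htdef
  have h0 : ((A ^ (M + N)) *ᵥ v) i = ((A ^ M) *ᵥ u2) i := by
    rw [hu2def, mulVec_mulVec, ← pow_add]
  have hterm : ∀ j, (A ^ M) i j * u2 j ≤ (A ^ M) i j * (t * v i * v j / D) := by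
    intro j
    rcases (lt_or_eq_of_le (pow_entry_nonneg hA M i j)) with hz | hz
    · have hp := hpair i j hz
      have hM' : rowSum (A ^ (k + M)) i = D := by
        rw [hDdef, rowSum_add]
      have hN' : rowSum (A ^ (k + N)) j = u2 j := by
        rw [hu2def, rowSum_add]
      rw [hM', hN'] at hp
      have hu2le : u2 j ≤ t * v i * v j / D := by
        rw [le_div_iff₀ hD]
        calc u2 j * D = D * u2 j := by ring
          _ ≤ t * (v i * v j) := hp
          _ = t * v i * v j := by ring
      exact mul_le_mul_of_nonneg_left hu2le hz.le
    · rw [← hz, zero_mul, zero_mul]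
  calc ((A ^ (M + N)) *ᵥ v) i = ((A ^ M) *ᵥ u2) i := h0
    _ = ∑ j, (A ^ M) i j * u2 j := by simp [Matrix.mulVec, dotProduct]
    _ ≤ ∑ j, (A ^ M) i j * (t * v i * v j / D) := Finset.sum_le_sum fun j _ => hterm j
    _ = (t * v i / D) * ∑ j, (A ^ M) i j * v j := by
        rw [Finset.mul_sum]
        exact Finset.sum_congr rfl fun j _ => by ring
    _ = (t * v i / D) * D := by
        congr 1
    _ = t * v i := div_mul_cancel₀ _ hD.ne'

lemma mulVec_ge_of_pairs (hn : n ≠ 0) {A : Matrix (Fin n) (Fin n) ℝ} (hA : ∀ i j, 0 ≤ A i j)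
    (hr : ∀ i, (∑ j, A i j) ≠ 0) {M N k : ℕ}
    (hpair : ∀ i j, 0 < (A ^ M) i j →
      specRad A ^ (M + N) * (rowSum (A ^ k) i * rowSum (A ^ k) j) ≤
        rowSum (A ^ (k + M)) i * rowSum (A ^ (k + N)) j) :
    ∀ i, specRad A ^ (M + N) * rowSum (A ^ k) i ≤
      ((A ^ (M + N)) *ᵥ (fun j => rowSum (A ^ k) j)) i := by
  intro i
  set ρ := specRad A with hρdef
  set v : Fin n → ℝ := fun j => rowSum (A ^ k) j with hvdef
  have hvpos : ∀ l, 0 < v l := fun l => rowSum_pow_pos hA hr k l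
  set u2 : Fin n → ℝ := (A ^ N) *ᵥ v with hu2def
  set D : ℝ := ((A ^ M) *ᵥ v) i with hDdef
  have hD : 0 < D := pow_mulVec_pos hA hr hvpos M i
  set t : ℝ := ρ ^ (M + N) with htdef
  have h0 : ((A ^ (M + N)) *ᵥ v) i = ((A ^ M) *ᵥ u2) i := by
    rw [hu2def, mulVec_mulVec, ← pow_add]
  have hterm : ∀ j, (A ^ M) i j * (t * v i * v j / D) ≤ (A ^ M) i j * u2 j := by
    intro j
    rcases (lt_or_eq_of_le (pow_entry_nonneg hA M i j)) with hz | hz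
    · have hp := hpair i j hz
      have hM' : rowSum (A ^ (k + M)) i = D := by
        rw [hDdef, rowSum_add]
      have hN' : rowSum (A ^ (k + N)) j = u2 j := by
        rw [hu2def, rowSum_add]
      rw [hM', hN'] at hp
      have hu2le : t * v i * v j / D ≤ u2 j := by
        rw [div_le_iff₀ hD]
        calc t * v i * v j = t * (v i * v j) := by ring
          _ ≤ D * u2 j := hp
          _ = u2 j * D := by ring
      exact mul_le_mul_of_nonneg_left hu2le hz.le
    · rw [← hz, zero_mul, zero_mul]
  calc t * v i = (t * v i / D) * D := (div_mul_cancel₀ _ hD.ne').symm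
    _ = (t * v i / D) * ∑ j, (A ^ M) i j * v j := by
        congr 1
    _ = ∑ j, (A ^ M) i j * (t * v i * v j / D) := by
        rw [Finset.mul_sum]
        exact Finset.sum_congr rfl fun j _ => by ring
    _ ≤ ∑ j, (A ^ M) i j * u2 j := Finset.sum_le_sum fun j _ => hterm j
    _ = ((A ^ M) *ᵥ u2) i := by simp [Matrix.mulVec, dotProduct]
    _ = ((A ^ (M + N)) *ᵥ v) i := h0.symm

end Main

end Stmt11Aux

open Stmt11Aux

/-- Theorem 8 of the paper.
For a nonnegative matrix `A` with nonzero row sums, `M > 0`, `N ≥ 0`, `k ≥ 0`, such that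
`A^{M+N}` is irreducible, equality holds on either side (and hence both sides) of the
generalized Xu–Xu bound iff `r_i(A^{k+1}) / r_i(A^k) = ρ(A)` for every `i`. -/
theorem stmt11 {n : ℕ} (A : Matrix (Fin n) (Fin n) ℝ)
    (hA : ∀ i j, 0 ≤ A i j) (hr : ∀ i, rowSum A i ≠ 0) (M N k : ℕ) (hM : 0 < M)
    (hirr : IsIrred (A ^ (M + N))) :
    (specRad A = sSup {x : ℝ | ∃ i j : Fin n, 0 < (A ^ M) i j ∧
        x = (rowSum (A ^ (k + M)) i * rowSum (A ^ (k + N)) j /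
              (rowSum (A ^ k) i * rowSum (A ^ k) j)) ^ (((M : ℝ) + N))⁻¹} ↔
      ∀ i : Fin n, rowSum (A ^ (k + 1)) i / rowSum (A ^ k) i = specRad A) ∧
    (specRad A = sInf {x : ℝ | ∃ i j : Fin n, 0 < (A ^ M) i j ∧
        x = (rowSum (A ^ (k + M)) i * rowSum (A ^ (k + N)) j /
              (rowSum (A ^ k) i * rowSum (A ^ k) j)) ^ (((M : ℝ) + N))⁻¹} ↔
      ∀ i : Fin n, rowSum (A ^ (k + 1)) i / rowSum (A ^ k) i = specRad A) := by
  rcases Nat.eq_zero_or_pos n with hn0 | hnpos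
  · -- degenerate case `n = 0`
    subst hn0
    have hS : {x : ℝ | ∃ i j : Fin 0, 0 < (A ^ M) i j ∧
        x = (rowSum (A ^ (k + M)) i * rowSum (A ^ (k + N)) j /
              (rowSum (A ^ k) i * rowSum (A ^ k) j)) ^ (((M : ℝ) + N))⁻¹} = ∅ :=
      Set.eq_empty_iff_forall_notMem.mpr (fun x hx => hx.choose.elim0)
    have hρ0 : specRad A = 0 := by
      haveI : Subsingleton (Matrix (Fin 0) (Fin 0) ℂ) :=
        ⟨fun a b => by ext i; exact i.elim0⟩
      have hσ : spectrum ℂ (A.map (fun x : ℝ => (x : ℂ))) = ∅ := by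
        ext μ
        simp only [Set.mem_empty_iff_false, iff_false]
        intro hμ
        exact (spectrum.mem_iff.mp hμ) (isUnit_of_subsingleton _)
      rw [specRad, hσ, Set.image_empty, Real.sSup_empty]
    constructor
    · exact ⟨fun _ i => i.elim0, fun _ => by rw [hρ0, hS, Real.sSup_empty]⟩
    · exact ⟨fun _ i => i.elim0, fun _ => by rw [hρ0, hS, Real.sInf_empty]⟩
  · -- main case
    have hn : n ≠ 0 := hnpos.ne'
    haveI : NeZero n := ⟨hn⟩
    have hr' : ∀ i, (∑ j, A i j) ≠ 0 := hr
    have hMN : 0 < M + N := by omega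
    have hMN0 : ((M : ℝ) + N) ≠ 0 := by positivity
    have hSfin : {x : ℝ | ∃ i j : Fin n, 0 < (A ^ M) i j ∧
        x = (rowSum (A ^ (k + M)) i * rowSum (A ^ (k + N)) j /
              (rowSum (A ^ k) i * rowSum (A ^ k) j)) ^ (((M : ℝ) + N))⁻¹}.Finite := by
      refine Set.Finite.subset (Set.finite_range
        (fun p : Fin n × Fin n => (rowSum (A ^ (k + M)) p.1 * rowSum (A ^ (k + N)) p.2 /
          (rowSum (A ^ k) p.1 * rowSum (A ^ k) p.2)) ^ (((M : ℝ) + N))⁻¹)) ?_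
      rintro x ⟨i, j, -, rfl⟩
      exact ⟨(i, j), rfl⟩
    obtain ⟨j0, hj0⟩ : ∃ j, 0 < (A ^ M) 0 j := by
      refine exists_pos_entry (pow_entry_nonneg hA M) ?_
      have := rowSum_pow_pos hA hr' M 0
      rw [rowSum] at this
      exact this.ne'
    have hSne : {x : ℝ | ∃ i j : Fin n, 0 < (A ^ M) i j ∧
        x = (rowSum (A ^ (k + M)) i * rowSum (A ^ (k + N)) j /
              (rowSum (A ^ k) i * rowSum (A ^ k) j)) ^ (((M : ℝ) + N))⁻¹}.Nonempty :=
      ⟨_, 0, j0, hj0, rfl⟩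
    have hbasepos : ∀ i j : Fin n, 0 < rowSum (A ^ (k + M)) i * rowSum (A ^ (k + N)) j /
        (rowSum (A ^ k) i * rowSum (A ^ k) j) := fun i j =>
      div_pos (mul_pos (rowSum_pow_pos hA hr' _ i) (rowSum_pow_pos hA hr' _ j))
        (mul_pos (rowSum_pow_pos hA hr' _ i) (rowSum_pow_pos hA hr' _ j))
    have hpos_elem : ∀ x ∈ {x : ℝ | ∃ i j : Fin n, 0 < (A ^ M) i j ∧
        x = (rowSum (A ^ (k + M)) i * rowSum (A ^ (k + N)) j /
              (rowSum (A ^ k) i * rowSum (A ^ k) j)) ^ (((M : ℝ) + N))⁻¹}, 0 < x := by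
      rintro x ⟨i, j, -, rfl⟩
      exact Real.rpow_pos_of_pos (hbasepos i j) _
    have hxpow : ∀ i j : Fin n,
        ((rowSum (A ^ (k + M)) i * rowSum (A ^ (k + N)) j /
          (rowSum (A ^ k) i * rowSum (A ^ k) j)) ^ (((M : ℝ) + N))⁻¹) ^ (M + N)
          = rowSum (A ^ (k + M)) i * rowSum (A ^ (k + N)) j /
              (rowSum (A ^ k) i * rowSum (A ^ k) j) := by
      intro i j
      rw [← Real.rpow_natCast (_ ^ (((M : ℝ) + N))⁻¹) (M + N),
        ← Real.rpow_mul (hbasepos i j).le]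
      push_cast
      rw [inv_mul_cancel₀ hMN0, Real.rpow_one]
    have hvpos : ∀ i, 0 < rowSum (A ^ k) i := rowSum_pow_pos hA hr' k
    have hsp : specRad (A ^ (M + N)) = specRad A ^ (M + N) := specRad_pow hn A hMN
    constructor
    · constructor
      · -- sSup equality implies constant ratios
        intro h
        have hρS := h ▸ hSne.csSup_mem hSfin
        have hρpos : 0 < specRad A := hpos_elem _ hρS
        have hub : ∀ x ∈ {x : ℝ | ∃ i j : Fin n, 0 < (A ^ M) i j ∧
            x = (rowSum (A ^ (k + M)) i * rowSum (A ^ (k + N)) j /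
              (rowSum (A ^ k) i * rowSum (A ^ k) j)) ^ (((M : ℝ) + N))⁻¹},
            x ≤ specRad A := fun x hx => h ▸ le_csSup hSfin.bddAbove hx
        have hpair : ∀ i j, 0 < (A ^ M) i j →
            rowSum (A ^ (k + M)) i * rowSum (A ^ (k + N)) j ≤
              specRad A ^ (M + N) * (rowSum (A ^ k) i * rowSum (A ^ k) j) := by
          intro i j hij
          have hQ : 0 < rowSum (A ^ k) i * rowSum (A ^ k) j :=
            mul_pos (hvpos i) (hvpos j)
          have hxle := hub _ ⟨i, j, hij, rfl⟩
          have hle : rowSum (A ^ (k + M)) i * rowSum (A ^ (k + N)) j /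
              (rowSum (A ^ k) i * rowSum (A ^ k) j) ≤ specRad A ^ (M + N) := by
            rw [← hxpow i j]
            exact pow_le_pow_left₀ (Real.rpow_pos_of_pos (hbasepos i j) _).le hxle _
          exact (div_le_iff₀ hQ).mp hle
        have hBle := mulVec_le_of_pairs hn hA hr' hpair
        have heq := subinvariant_eq hn (pow_entry_nonneg hA (M + N)) hirr hvpos
          (by rw [hsp]; exact pow_pos hρpos _)
          (fun i => by rw [hsp]; exact hBle i)
        exact conclude hn hA hr' hirr (fun i => by rw [← hsp]; exact heq i)
      · intro hrat
        rw [set_eq_of_ratios hn hA hr' hM hrat]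
        exact (csSup_singleton _).symm
    · constructor
      · -- sInf equality implies constant ratios
        intro h
        have hρS := h ▸ hSne.csInf_mem hSfin
        have hρpos : 0 < specRad A := hpos_elem _ hρS
        have hlb : ∀ x ∈ {x : ℝ | ∃ i j : Fin n, 0 < (A ^ M) i j ∧
            x = (rowSum (A ^ (k + M)) i * rowSum (A ^ (k + N)) j /
              (rowSum (A ^ k) i * rowSum (A ^ k) j)) ^ (((M : ℝ) + N))⁻¹},
            specRad A ≤ x := fun x hx => h ▸ csInf_le hSfin.bddBelow hx
        have hpair : ∀ i j, 0 < (A ^ M) i j →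
            specRad A ^ (M + N) * (rowSum (A ^ k) i * rowSum (A ^ k) j) ≤
              rowSum (A ^ (k + M)) i * rowSum (A ^ (k + N)) j := by
          intro i j hij
          have hQ : 0 < rowSum (A ^ k) i * rowSum (A ^ k) j :=
            mul_pos (hvpos i) (hvpos j)
          have hxge := hlb _ ⟨i, j, hij, rfl⟩
          have hle : specRad A ^ (M + N) ≤
              rowSum (A ^ (k + M)) i * rowSum (A ^ (k + N)) j /
                (rowSum (A ^ k) i * rowSum (A ^ k) j) := by
            rw [← hxpow i j]
            exact pow_le_pow_left₀ hρpos.le hxge _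
          have := (le_div_iff₀ hQ).mp hle
          calc specRad A ^ (M + N) * (rowSum (A ^ k) i * rowSum (A ^ k) j)
              = (rowSum (A ^ k) i * rowSum (A ^ k) j) * specRad A ^ (M + N) := by ring
            _ ≤ rowSum (A ^ (k + M)) i * rowSum (A ^ (k + N)) j := by
                calc (rowSum (A ^ k) i * rowSum (A ^ k) j) * specRad A ^ (M + N)
                    = specRad A ^ (M + N) * (rowSum (A ^ k) i * rowSum (A ^ k) j) := by ring
                  _ ≤ _ := this
        have hBge := mulVec_ge_of_pairs hn hA hr' hpair
        have heq := superinvariant_eq hn (pow_entry_nonneg hA (M + N)) hirr hvpos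
          (by rw [hsp]; exact pow_pos hρpos _)
          (fun i => by rw [hsp]; exact hBge i)
        exact conclude hn hA hr' hirr (fun i => by rw [← hsp]; exact heq i)
      · intro hrat
        rw [set_eq_of_ratios hn hA hr' hM hrat]
        exact (csInf_singleton _).symm
end

section
/- Let A be an n×n nonnegative real matrix with all row sums nonzero, and let L > 0, k ≥ 0 be integers such that A^L is irreducible. Then equality holds on either side (and hence both sides) of min_i ( r_i(A^{k+L})/r_i(A^k) )^{1/L} ≤ ρ(A) ≤ max_i ( r_i(A^{k+L})/r_i(A^k) )^{1/L} if and only if r_i(A^{k+1}) / r_i(A^k) = ρ(A) for every i ∈ {1,…,n}. -/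
open Matrix

open Matrix Finset

namespace Stmt12

variable {n : ℕ}

lemma mulVec_nonneg {B : Matrix (Fin n) (Fin n) ℝ} (hB : ∀ i j, 0 ≤ B i j)
    {v : Fin n → ℝ} (hv : ∀ i, 0 ≤ v i) : ∀ i, 0 ≤ B.mulVec v i := by
  intro i
  simp only [Matrix.mulVec, dotProduct]
  exact Finset.sum_nonneg fun j _ => mul_nonneg (hB i j) (hv j)

lemma mulVec_mono {B : Matrix (Fin n) (Fin n) ℝ} (hB : ∀ i j, 0 ≤ B i j)
    {v w : Fin n → ℝ} (h : ∀ i, v i ≤ w i) : ∀ i, B.mulVec v i ≤ B.mulVec w i := by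
  intro i
  simp only [Matrix.mulVec, dotProduct]
  exact Finset.sum_le_sum fun j _ => mul_le_mul_of_nonneg_left (h j) (hB i j)

lemma mulVec_apply' (B : Matrix (Fin n) (Fin n) ℝ) (v : Fin n → ℝ) (i : Fin n) :
    B.mulVec v i = ∑ j, B i j * v j := rfl

lemma pow_entry_nonneg {A : Matrix (Fin n) (Fin n) ℝ} (hA : ∀ i j, 0 ≤ A i j) :
    ∀ m i j, 0 ≤ (A ^ m) i j := by
  intro m
  induction m with
  | zero => intro i j; simp only [pow_zero]
            by_cases h : i = j <;> simp [Matrix.one_apply, h]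
  | succ t ih =>
      intro i j
      rw [pow_succ, Matrix.mul_apply]
      exact Finset.sum_nonneg fun l _ => mul_nonneg (ih i l) (hA l j)

lemma rowSum_mul (M N : Matrix (Fin n) (Fin n) ℝ) (i : Fin n) :
    rowSum (M * N) i = ∑ j, M i j * rowSum N j := by
  simp only [rowSum, Matrix.mul_apply, Finset.mul_sum]
  rw [Finset.sum_comm]

lemma rowSum_pow_pos {A : Matrix (Fin n) (Fin n) ℝ} (hA : ∀ i j, 0 ≤ A i j)
    (hr : ∀ i, rowSum A i ≠ 0) : ∀ m i, 0 < rowSum (A ^ m) i := by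
  intro m
  induction m with
  | zero => intro i; simp [rowSum, Matrix.one_apply]
  | succ t ih =>
      intro i
      have : A ^ (t + 1) = A * A ^ t := by rw [pow_succ']
      rw [this, rowSum_mul]
      have hex : ∃ j, A i j ≠ 0 := by
        by_contra hc
        push_neg at hc
        exact hr i (by simp [rowSum, hc])
      obtain ⟨j, hj⟩ := hex
      refine Finset.sum_pos' (fun l _ => mul_nonneg (hA i l) (ih l).le) ⟨j, Finset.mem_univ j, ?_⟩
      exact mul_pos (lt_of_le_of_ne (hA i j) (Ne.symm hj)) (ih j)

end Stmt12
namespace Stmt12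

variable {n : ℕ}

/-- entries of `(1+B)^t` are nonneg. -/
lemma onePlus_pow_nonneg {B : Matrix (Fin n) (Fin n) ℝ} (hB : ∀ i j, 0 ≤ B i j) (t : ℕ) :
    ∀ i j, 0 ≤ ((1 + B) ^ t) i j := by
  apply pow_entry_nonneg
  intro i j
  by_cases h : i = j <;>
    simp [Matrix.add_apply, Matrix.one_apply, h, hB i j, le_add_of_nonneg_of_le, hB]

lemma onePlus_rec (B : Matrix (Fin n) (Fin n) ℝ) (t : ℕ) (y : Fin n → ℝ) :
    ((1 + B) ^ (t + 1)).mulVec y =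
      ((1 + B) ^ t).mulVec y + B.mulVec (((1 + B) ^ t).mulVec y) := by
  rw [pow_succ', ← Matrix.mulVec_mulVec, Matrix.add_mulVec, Matrix.one_mulVec]

lemma onePlus_mulVec_nonneg {B : Matrix (Fin n) (Fin n) ℝ} (hB : ∀ i j, 0 ≤ B i j) (t : ℕ)
    {y : Fin n → ℝ} (hy : ∀ i, 0 ≤ y i) : ∀ i, 0 ≤ (((1 + B) ^ t).mulVec y) i :=
  mulVec_nonneg (onePlus_pow_nonneg hB t) hy

lemma le_onePlus_mulVec {B : Matrix (Fin n) (Fin n) ℝ} (hB : ∀ i j, 0 ≤ B i j) (t : ℕ)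
    {y : Fin n → ℝ} (hy : ∀ i, 0 ≤ y i) : ∀ i, y i ≤ (((1 + B) ^ t).mulVec y) i := by
  induction t with
  | zero => intro i; simp [Matrix.one_mulVec]
  | succ t ih =>
      intro i
      rw [onePlus_rec]
      have h2 : 0 ≤ B.mulVec (((1 + B) ^ t).mulVec y) i :=
        mulVec_nonneg hB (onePlus_mulVec_nonneg hB t hy) i
      have := ih i
      simp only [Pi.add_apply]
      linarith

/-- key positivity: irreducible `B`, `y ≥ 0`, `y ≠ 0` implies `(1+B)^(n-1) y > 0`. -/
lemma onePlus_pow_mulVec_pos [NeZero n] {B : Matrix (Fin n) (Fin n) ℝ} (hB : ∀ i j, 0 ≤ B i j)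
    (hirr : IsIrred B) {y : Fin n → ℝ} (hy : ∀ i, 0 ≤ y i) (hy0 : y ≠ 0) :
    ∀ i, 0 < (((1 + B) ^ (n - 1)).mulVec y) i := by
  classical
  set g : ℕ → Fin n → ℝ := fun t => ((1 + B) ^ t).mulVec y with hg
  have gnn : ∀ t i, 0 ≤ g t i := fun t => onePlus_mulVec_nonneg hB t hy
  have gmono : ∀ t i, g t i ≤ g (t + 1) i := by
    intro t i
    have h2 : 0 ≤ B.mulVec (g t) i := mulVec_nonneg hB (gnn t) i
    have : g (t + 1) i = g t i + B.mulVec (g t) i := by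
      simp only [hg, onePlus_rec]; rfl
    linarith
  set S : ℕ → Finset (Fin n) := fun t => Finset.univ.filter (fun i => 0 < g t i) with hS
  have hcardle : ∀ t, (S t).card ≤ n := fun t => by
    simpa using Finset.card_le_univ (S t)
  have hSmono : ∀ t, S t ⊆ S (t + 1) := by
    intro t i hi
    simp only [hS, Finset.mem_filter, Finset.mem_univ, true_and] at hi ⊢
    exact lt_of_lt_of_le hi (gmono t i)
  have hcard : ∀ t, min (t + 1) n ≤ (S t).card := by
    intro t
    induction t with
    | zero =>
        obtain ⟨i, hi⟩ := Function.ne_iff.mp hy0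
        have : i ∈ S 0 := by
          simp only [hS, Finset.mem_filter, Finset.mem_univ, true_and]
          have : y i ≠ 0 := by simpa using hi
          have h0 : g 0 = y := by simp [hg, Matrix.one_mulVec]
          rw [h0]
          exact lt_of_le_of_ne (hy i) (Ne.symm this)
        calc min 1 n ≤ 1 := min_le_left _ _
        _ ≤ (S 0).card := Finset.card_pos.mpr ⟨i, this⟩
    | succ t ih =>
        by_cases hu : S t = Finset.univ
        · have h1 : (S t).card ≤ (S (t + 1)).card := Finset.card_le_card (hSmono t)
          have h2 : (S t).card = n := by rw [hu]; simp
          have h3 : min (t + 1 + 1) n ≤ n := min_le_right _ _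
          omega
        · -- S t is not everything; use irreducibility
          have hne : (S t).Nonempty := by
            rw [← Finset.card_pos]
            have := ih
            have : (0:ℕ) < min (t+1) n := lt_min (Nat.succ_pos t) (Nat.pos_of_ne_zero (NeZero.ne n))
            omega
          have hco : ∃ i, i ∉ S t := by
            by_contra hc
            push_neg at hc
            exact hu (Finset.eq_univ_iff_forall.mpr hc)
          -- apply irreducibility to the complement of S t
          have hset : ∃ i ∈ ((↑(S t) : Set (Fin n))ᶜ), ∃ j ∈ ((↑(S t) : Set (Fin n))ᶜ)ᶜ, B i j ≠ 0 := by
            apply hirr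
            · obtain ⟨i, hi⟩ := hco
              exact ⟨i, by simpa using hi⟩
            · intro hc
              obtain ⟨i, hi⟩ := hne
              have : i ∈ ((↑(S t) : Set (Fin n))ᶜ) := hc ▸ Set.mem_univ i
              simp at this
              exact this hi
          obtain ⟨i, hiS, j, hjS, hBij⟩ := hset
          simp only [Set.mem_compl_iff, Finset.mem_coe, compl_compl] at hiS hjS
          -- g (t+1) i > 0
          have hgj : 0 < g t j := by
            simp only [hS, Finset.mem_filter, Finset.mem_univ, true_and] at hjS
            exact hjS
          have hBmv : 0 < B.mulVec (g t) i := by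
            rw [mulVec_apply']
            refine Finset.sum_pos' (fun l _ => mul_nonneg (hB i l) (gnn t l)) ⟨j, Finset.mem_univ j, ?_⟩
            exact mul_pos (lt_of_le_of_ne (hB i j) (Ne.symm hBij)) hgj
          have hi1 : i ∈ S (t + 1) := by
            simp only [hS, Finset.mem_filter, Finset.mem_univ, true_and]
            have : g (t + 1) i = g t i + B.mulVec (g t) i := by
              simp only [hg, onePlus_rec]; rfl
            rw [this]
            have := gnn t i
            linarith
          have hsub : insert i (S t) ⊆ S (t + 1) := by
            intro l hl
            rcases Finset.mem_insert.mp hl with h | h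
            · exact h ▸ hi1
            · exact hSmono t h
          have : (S t).card + 1 ≤ (S (t+1)).card := by
            have := Finset.card_le_card hsub
            rwa [Finset.card_insert_of_notMem hiS] at this
          have hle : (S t).card ≤ n - 1 := by
            have h1 : (S t).card ≤ n := hcardle t
            have : (S t).card ≠ n := by
              intro hc
              exact hu (Finset.eq_univ_of_card _ (by simp only [Fintype.card_fin]; exact hc))
            omega
          have := ih
          omega
  intro i
  have := hcard (n - 1)
  have hn : 0 < n := Nat.pos_of_ne_zero (NeZero.ne n)
  have hSu : S (n - 1) = Finset.univ := by
    apply Finset.eq_univ_of_card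
    have h1 : (S (n-1)).card ≤ n := hcardle _
    rw [Fintype.card_fin]
    omega
  have : i ∈ S (n - 1) := hSu ▸ Finset.mem_univ i
  simpa only [hS, Finset.mem_filter, Finset.mem_univ, true_and] using this

end Stmt12
namespace Stmt12

variable {n : ℕ}

lemma onePlus_pow_of_eig {B : Matrix (Fin n) (Fin n) ℝ} {s : ℝ} {v : Fin n → ℝ}
    (hv : B.mulVec v = s • v) (t : ℕ) : ((1 + B) ^ t).mulVec v = (1 + s) ^ t • v := by
  induction t with
  | zero => simp [Matrix.one_mulVec]
  | succ t ih =>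
      rw [onePlus_rec, ih, Matrix.mulVec_smul, hv, smul_smul, pow_succ]
      ext i
      simp only [Pi.add_apply, Pi.smul_apply, smul_eq_mul]
      ring

lemma eigvec_unique [NeZero n] {B : Matrix (Fin n) (Fin n) ℝ} (hB : ∀ i j, 0 ≤ B i j)
    (hirr : IsIrred B) {s : ℝ} (hs : 0 ≤ s) {x u : Fin n → ℝ}
    (hx : ∀ i, 0 < x i) (hu : ∀ i, 0 < u i)
    (hBx : B.mulVec x = s • x) (hBu : B.mulVec u = s • u) :
    ∃ c : ℝ, 0 < c ∧ u = c • x := by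
  obtain ⟨i₀, -, hi₀⟩ := Finset.exists_min_image Finset.univ (fun i => u i / x i)
    Finset.univ_nonempty
  set c := u i₀ / x i₀ with hc
  have hcpos : 0 < c := div_pos (hu i₀) (hx i₀)
  refine ⟨c, hcpos, ?_⟩
  set v : Fin n → ℝ := u - c • x with hv
  have hvnn : ∀ i, 0 ≤ v i := by
    intro i
    have := hi₀ i (Finset.mem_univ i)
    have h2 : c * x i ≤ u i := by
      rw [hc]
      calc u i₀ / x i₀ * x i ≤ u i / x i * x i :=
        mul_le_mul_of_nonneg_right this (hx i).le
      _ = u i := div_mul_cancel₀ _ (hx i).ne'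
    simp only [hv, Pi.sub_apply, Pi.smul_apply, smul_eq_mul]
    linarith
  have hvi₀ : v i₀ = 0 := by
    simp only [hv, Pi.sub_apply, Pi.smul_apply, smul_eq_mul, hc]
    rw [div_mul_cancel₀ _ (hx i₀).ne']
    ring
  have hBv : B.mulVec v = s • v := by
    rw [hv, Matrix.mulVec_sub, Matrix.mulVec_smul, hBx, hBu, smul_sub, smul_smul, smul_smul,
      mul_comm]
  by_contra hne
  have hv0 : v ≠ 0 := by
    intro hc0
    apply hne
    have : u = c • x := by rwa [hv, sub_eq_zero] at hc0
    exact this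
  have hpos := onePlus_pow_mulVec_pos hB hirr hvnn hv0 i₀
  rw [onePlus_pow_of_eig hBv] at hpos
  simp only [Pi.smul_apply, smul_eq_mul, hvi₀, mul_zero] at hpos
  exact lt_irrefl 0 hpos

end Stmt12
namespace Stmt12

section Spectral

attribute [local instance] Matrix.linftyOpNormedAddCommGroup Matrix.linftyOpNormedRing
  Matrix.linftyOpNormedAlgebra

variable {n : ℕ} [NeZero n]

noncomputable def toC {n : ℕ} (A : Matrix (Fin n) (Fin n) ℝ) : Matrix (Fin n) (Fin n) ℂ :=
  A.map (fun x : ℝ => (x : ℂ))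

lemma toC_pow (A : Matrix (Fin n) (Fin n) ℝ) (m : ℕ) : toC (A ^ m) = toC A ^ m := by
  have h : ∀ C : Matrix (Fin n) (Fin n) ℝ, toC C = Complex.ofRealHom.mapMatrix C := fun _ => rfl
  rw [h, h, map_pow]

lemma specRad_eq_sSup (A : Matrix (Fin n) (Fin n) ℝ) :
    specRad A = sSup ((fun μ : ℂ => ‖μ‖) '' spectrum ℂ (toC A)) := rfl

instance : CompleteSpace (Matrix (Fin n) (Fin n) ℂ) :=
  inferInstance

lemma specRad_greatest (A : Matrix (Fin n) (Fin n) ℝ) :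
    IsGreatest ((fun μ : ℂ => ‖μ‖) '' spectrum ℂ (toC A)) (specRad A) := by
  have hne : (spectrum ℂ (toC A)).Nonempty := spectrum.nonempty (toC A)
  have hcp : IsCompact (spectrum ℂ (toC A)) := spectrum.isCompact (toC A)
  obtain ⟨μ, hμ, hmax⟩ := hcp.exists_isMaxOn hne (continuous_norm.continuousOn)
  have hg : IsGreatest ((fun μ : ℂ => ‖μ‖) '' spectrum ℂ (toC A)) (‖μ‖) := by
    constructor
    · exact ⟨μ, hμ, rfl⟩
    · rintro _ ⟨ν, hν, rfl⟩
      exact hmax hν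
  have : specRad A = ‖μ‖ := hg.csSup_eq
  rwa [this]

lemma specRad_nonneg (A : Matrix (Fin n) (Fin n) ℝ) : 0 ≤ specRad A := by
  obtain ⟨μ, -, hμ⟩ := (specRad_greatest A).1
  rw [← hμ]
  exact norm_nonneg μ

lemma specRad_pow_greatest (A : Matrix (Fin n) (Fin n) ℝ) {L : ℕ} (hL : 0 < L) :
    IsGreatest ((fun μ : ℂ => ‖μ‖) '' spectrum ℂ (toC (A ^ L))) (specRad A ^ L) := by
  rw [toC_pow, spectrum.map_pow_of_pos (toC A) hL, Set.image_image]
  obtain ⟨⟨μ₀, hμ₀, habs⟩, hub⟩ := specRad_greatest A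
  have habs' : ‖μ₀‖ = specRad A := habs
  constructor
  · refine ⟨μ₀, hμ₀, ?_⟩
    show ‖μ₀ ^ L‖ = specRad A ^ L
    rw [norm_pow, habs']
  · rintro _ ⟨ν, hν, rfl⟩
    show ‖ν ^ L‖ ≤ specRad A ^ L
    rw [norm_pow]
    exact pow_le_pow_left₀ (norm_nonneg ν) (hub ⟨ν, hν, rfl⟩) L

/-- Upper Collatz–Wielandt bound via an eigenvector argument. -/
lemma abs_le_of_mulVec_le {B : Matrix (Fin n) (Fin n) ℝ} (hB : ∀ i j, 0 ≤ B i j)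
    {z : Fin n → ℝ} (hz : ∀ i, 0 < z i) {c : ℝ} (hc : ∀ i, B.mulVec z i ≤ c * z i)
    {μ : ℂ} (hμ : μ ∈ spectrum ℂ (toC B)) : ‖μ‖ ≤ c := by
  classical
  have hunit := spectrum.mem_iff.mp hμ
  have hdet : (algebraMap ℂ (Matrix (Fin n) (Fin n) ℂ) μ - toC B).det = 0 := by
    by_contra hd
    exact hunit ((Matrix.isUnit_iff_isUnit_det _).mpr (isUnit_iff_ne_zero.mpr hd))
  obtain ⟨v, hv0, hv⟩ := (Matrix.exists_mulVec_eq_zero_iff).mpr hdet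
  have hvec : (toC B).mulVec v = μ • v := by
    rw [Algebra.algebraMap_eq_smul_one, Matrix.sub_mulVec, Matrix.smul_mulVec,
      Matrix.one_mulVec, sub_eq_zero] at hv
    exact hv.symm
  obtain ⟨i, -, hi⟩ := Finset.exists_max_image Finset.univ
    (fun j => ‖v j‖ / z j) Finset.univ_nonempty
  set t := ‖v i‖ / z i with ht
  obtain ⟨j₀, hj₀⟩ := Function.ne_iff.mp hv0
  have htpos : 0 < t := by
    have h1 : 0 < ‖v j₀‖ / z j₀ :=
      div_pos (norm_pos_iff.mpr (by simpa using hj₀)) (hz j₀)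
    exact lt_of_lt_of_le h1 (hi j₀ (Finset.mem_univ j₀))
  have habs : ∀ j, ‖v j‖ ≤ t * z j := by
    intro j
    have := hi j (Finset.mem_univ j)
    calc ‖v j‖ = ‖v j‖ / z j * z j := (div_mul_cancel₀ _ (hz j).ne').symm
    _ ≤ t * z j := mul_le_mul_of_nonneg_right this (hz j).le
  have hvi : ‖v i‖ = t * z i := (div_mul_cancel₀ _ (hz i).ne').symm
  have hkey : ‖μ‖ * ‖v i‖ ≤ c * ‖v i‖ := by
    have h1 : ‖μ‖ * ‖v i‖ = ‖(toC B).mulVec v i‖ := by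
      rw [hvec]
      simp
    rw [h1]
    have h2 : (toC B).mulVec v i = ∑ j, (B i j : ℂ) * v j := rfl
    rw [h2]
    calc ‖∑ j, (B i j : ℂ) * v j‖ ≤ ∑ j, ‖(B i j : ℂ) * v j‖ :=
        norm_sum_le _ _
    _ = ∑ j, B i j * ‖v j‖ := by
        apply Finset.sum_congr rfl
        intro j _
        rw [norm_mul, Complex.norm_real, Real.norm_eq_abs, abs_of_nonneg (hB i j)]
    _ ≤ ∑ j, B i j * (t * z j) := Finset.sum_le_sum fun j _ =>
        mul_le_mul_of_nonneg_left (habs j) (hB i j)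
    _ = t * B.mulVec z i := by
        rw [mulVec_apply', Finset.mul_sum]
        apply Finset.sum_congr rfl
        intro j _; ring
    _ ≤ t * (c * z i) := mul_le_mul_of_nonneg_left (hc i) htpos.le
    _ = c * (t * z i) := by ring
    _ = c * ‖v i‖ := by rw [hvi]
  have hvipos : 0 < ‖v i‖ := by rw [hvi]; exact mul_pos htpos (hz i)
  exact le_of_mul_le_mul_right (by linarith [hkey]) hvipos

/-- Lower Collatz–Wielandt bound via Gelfand's formula. -/
lemma le_greatest_of_mulVec_ge {B : Matrix (Fin n) (Fin n) ℝ} (hB : ∀ i j, 0 ≤ B i j)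
    {z : Fin n → ℝ} (hz : ∀ i, 0 < z i) {c : ℝ} (hc0 : 0 ≤ c)
    (hc : ∀ i, c * z i ≤ B.mulVec z i) {g : ℝ}
    (hg : IsGreatest ((fun μ : ℂ => ‖μ‖) '' spectrum ℂ (toC B)) g) : c ≤ g := by
  classical
  have hg0 : 0 ≤ g := by
    obtain ⟨μ, -, hμ⟩ := hg.1
    rw [← hμ]; exact norm_nonneg μ
  -- spectralRadius = ofReal g
  have hsr : spectralRadius ℂ (toC B) = ENNReal.ofReal g := by
    apply le_antisymm
    · apply iSup₂_le
      intro μ hμ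
      rw [← enorm_eq_nnnorm, ← ofReal_norm]
      exact ENNReal.ofReal_le_ofReal (hg.2 ⟨μ, hμ, rfl⟩)
    · obtain ⟨μ₀, hμ₀, habs⟩ := hg.1
      have habs' : ‖μ₀‖ = g := habs
      have h1 : ENNReal.ofReal g = (‖μ₀‖₊ : ENNReal) := by
        rw [← enorm_eq_nnnorm, ← ofReal_norm, habs']
      rw [h1]
      exact le_iSup₂ (f := fun k (_ : k ∈ spectrum ℂ (toC B)) => (‖k‖₊ : ENNReal)) μ₀ hμ₀
  -- Gelfand
  have hlim := spectrum.pow_norm_pow_one_div_tendsto_nhds_spectralRadius (toC B)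
  rw [hsr] at hlim
  have hreal : Filter.Tendsto (fun t : ℕ => ‖toC B ^ t‖ ^ (1 / (t : ℝ))) Filter.atTop (nhds g) := by
    have h2 := (ENNReal.tendsto_toReal (ENNReal.ofReal_ne_top)).comp hlim
    rw [ENNReal.toReal_ofReal hg0] at h2
    apply h2.congr
    intro t
    simp only [Function.comp_apply]
    rw [ENNReal.toReal_ofReal (Real.rpow_nonneg (norm_nonneg _) _)]
  -- entrywise power bound
  have hpow : ∀ t i, c ^ t * z i ≤ (B ^ t).mulVec z i := by
    intro t
    induction t with
    | zero => intro i; simp [Matrix.one_mulVec]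
    | succ t ih =>
        intro i
        have h1 : (B ^ (t + 1)).mulVec z = (B ^ t).mulVec (B.mulVec z) := by
          rw [Matrix.mulVec_mulVec, ← pow_succ]
        rw [h1]
        have h2 : ∀ j, c * z j ≤ B.mulVec z j := hc
        have h3 : (B ^ t).mulVec (fun j => c * z j) i ≤ (B ^ t).mulVec (B.mulVec z) i :=
          mulVec_mono (pow_entry_nonneg hB t) h2 i
        have h4 : (B ^ t).mulVec (fun j => c * z j) i = c * (B ^ t).mulVec z i := by
          rw [mulVec_apply', mulVec_apply', Finset.mul_sum]
          apply Finset.sum_congr rfl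
          intro j _; ring
        have h5 := ih i
        calc c ^ (t + 1) * z i = c * (c ^ t * z i) := by ring
        _ ≤ c * ((B ^ t).mulVec z i) := mul_le_mul_of_nonneg_left h5 hc0
        _ = (B ^ t).mulVec (fun j => c * z j) i := h4.symm
        _ ≤ (B ^ t).mulVec (B.mulVec z) i := h3
  -- norm bound
  have hnorm : ∀ t, c ^ t ≤ ‖toC B ^ t‖ := by
    intro t
    obtain ⟨i, -, hi⟩ := Finset.exists_max_image Finset.univ z Finset.univ_nonempty
    have h1 : c ^ t * z i ≤ (∑ j, (B ^ t) i j) * z i := by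
      calc c ^ t * z i ≤ (B ^ t).mulVec z i := hpow t i
      _ = ∑ j, (B ^ t) i j * z j := rfl
      _ ≤ ∑ j, (B ^ t) i j * z i := Finset.sum_le_sum fun j _ =>
          mul_le_mul_of_nonneg_left (hi j (Finset.mem_univ j)) (pow_entry_nonneg hB t i j)
      _ = (∑ j, (B ^ t) i j) * z i := by rw [Finset.sum_mul]
    have h2 : c ^ t ≤ ∑ j, (B ^ t) i j := le_of_mul_le_mul_right h1 (hz i)
    have h3 : ∑ j, (B ^ t) i j = ∑ j, ‖(toC (B ^ t)) i j‖ := by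
      apply Finset.sum_congr rfl
      intro j _
      rw [toC]
      simp only [Matrix.map_apply]
      rw [Complex.norm_real, Real.norm_eq_abs, abs_of_nonneg (pow_entry_nonneg hB t i j)]
    have h4 : ∑ j, ‖(toC (B ^ t)) i j‖ ≤ ‖toC (B ^ t)‖ := by
      rw [Matrix.linfty_opNorm_def]
      have h5 : (∑ j, ‖(toC (B ^ t)) i j‖₊) ≤ (Finset.univ.sup fun l => ∑ j, ‖(toC (B ^ t)) l j‖₊) :=
        Finset.le_sup (f := fun l => ∑ j, ‖(toC (B ^ t)) l j‖₊) (Finset.mem_univ i)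
      calc ∑ j, ‖(toC (B ^ t)) i j‖ = ((∑ j, ‖(toC (B ^ t)) i j‖₊ : NNReal) : ℝ) := by
            push_cast; rfl
      _ ≤ _ := NNReal.coe_le_coe.mpr h5
    calc c ^ t ≤ ∑ j, (B ^ t) i j := h2
    _ = ∑ j, ‖(toC (B ^ t)) i j‖ := h3
    _ ≤ ‖toC (B ^ t)‖ := h4
    _ = ‖toC B ^ t‖ := by rw [toC_pow]
  -- eventual lower bound
  have hev : ∀ᶠ t : ℕ in Filter.atTop, c ≤ ‖toC B ^ t‖ ^ (1 / (t : ℝ)) := by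
    rw [Filter.eventually_atTop]
    refine ⟨1, fun t ht => ?_⟩
    have htne : (t : ℝ) ≠ 0 := Nat.cast_ne_zero.mpr (by omega)
    have h1 : (c ^ t : ℝ) ^ (1 / (t : ℝ)) = c := by
      rw [← Real.rpow_natCast c t, ← Real.rpow_mul hc0]
      rw [mul_one_div, div_self htne, Real.rpow_one]
    rw [← h1]
    exact Real.rpow_le_rpow (pow_nonneg hc0 t) (hnorm t) (by positivity)
  exact ge_of_tendsto hreal hev

end Spectral

end Stmt12

open Stmt12 Finset

/-- Corollary 1 of the paper.
For a nonnegative matrix `A` with nonzero row sums, `L > 0`, `k ≥ 0`, such that `A^L` is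
irreducible, equality holds on either side (and hence both sides) of Liu's bound
`min_i (r_i(A^{k+L})/r_i(A^k))^{1/L} ≤ ρ(A) ≤ max_i (r_i(A^{k+L})/r_i(A^k))^{1/L}`
iff `r_i(A^{k+1}) / r_i(A^k) = ρ(A)` for every `i`. -/
theorem stmt12 {n : ℕ} [NeZero n] (A : Matrix (Fin n) (Fin n) ℝ)
    (hA : ∀ i j, 0 ≤ A i j) (hr : ∀ i, rowSum A i ≠ 0) (L k : ℕ) (hL : 0 < L)
    (hirr : IsIrred (A ^ L)) :
    (specRad A = Finset.univ.sup' Finset.univ_nonempty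
        (fun i => (rowSum (A ^ (k + L)) i / rowSum (A ^ k) i) ^ ((L : ℝ))⁻¹) ↔
      ∀ i : Fin n, rowSum (A ^ (k + 1)) i / rowSum (A ^ k) i = specRad A) ∧
    (specRad A = Finset.univ.inf' Finset.univ_nonempty
        (fun i => (rowSum (A ^ (k + L)) i / rowSum (A ^ k) i) ^ ((L : ℝ))⁻¹) ↔
      ∀ i : Fin n, rowSum (A ^ (k + 1)) i / rowSum (A ^ k) i = specRad A) := by
  classical
  have hn : 0 < n := Nat.pos_of_ne_zero (NeZero.ne n)
  have hxpos : ∀ i, 0 < rowSum (A ^ k) i := rowSum_pow_pos hA hr k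
  have hBnn : ∀ i j, 0 ≤ (A ^ L) i j := pow_entry_nonneg hA L
  have hAkL : A ^ (k + L) = A ^ L * A ^ k := by rw [← pow_add, add_comm]
  have hAk1 : A ^ (k + 1) = A * A ^ k := pow_succ' A k
  have hBx : ∀ i, (A ^ L).mulVec (fun j => rowSum (A ^ k) j) i = rowSum (A ^ (k + L)) i := by
    intro i
    rw [hAkL, rowSum_mul, mulVec_apply']
  have hux : ∀ i, A.mulVec (fun j => rowSum (A ^ k) j) i = rowSum (A ^ (k + 1)) i := by
    intro i
    rw [hAk1, rowSum_mul, mulVec_apply']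
  have hRpos : ∀ i, 0 < rowSum (A ^ (k + L)) i / rowSum (A ^ k) i :=
    fun i => div_pos (rowSum_pow_pos hA hr _ i) (hxpos i)
  have hgreat := specRad_pow_greatest A hL
  -- the core implication: if x is an eigenvector of A^L for ρ^L then all first ratios are ρ
  have core : 0 < specRad A →
      ((A ^ L).mulVec (fun j => rowSum (A ^ k) j)
        = (specRad A ^ L) • (fun j => rowSum (A ^ k) j)) →
      ∀ i, rowSum (A ^ (k + 1)) i / rowSum (A ^ k) i = specRad A := by
    intro hρpos hBxEq
    have hupos : ∀ i, 0 < A.mulVec (fun j => rowSum (A ^ k) j) i := by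
      intro i; rw [hux i]; exact rowSum_pow_pos hA hr _ i
    have hcomm : A ^ L * A = A * A ^ L := by rw [← pow_succ, ← pow_succ']
    have hBu : (A ^ L).mulVec (A.mulVec (fun j => rowSum (A ^ k) j)) =
        (specRad A ^ L) • A.mulVec (fun j => rowSum (A ^ k) j) := by
      rw [Matrix.mulVec_mulVec, hcomm, ← Matrix.mulVec_mulVec, hBxEq, Matrix.mulVec_smul]
    obtain ⟨c, hcpos, hcu⟩ := eigvec_unique hBnn hirr (pow_nonneg hρpos.le L)
      hxpos hupos hBxEq hBu
    have hAt : ∀ t : ℕ, (A ^ t).mulVec (fun j => rowSum (A ^ k) j)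
        = (c ^ t) • (fun j => rowSum (A ^ k) j) := by
      intro t
      induction t with
      | zero => simp [Matrix.one_mulVec]
      | succ t ih =>
          rw [pow_succ A, ← Matrix.mulVec_mulVec, hcu, Matrix.mulVec_smul, ih, smul_smul,
            ← pow_succ']
    have hcL : c ^ L = specRad A ^ L := by
      have h1 : (c ^ L) • (fun j => rowSum (A ^ k) j)
          = (specRad A ^ L) • (fun j => rowSum (A ^ k) j) := by
        rw [← hAt L, hBxEq]
      have h2 := congrFun h1 ⟨0, hn⟩
      simp only [Pi.smul_apply, smul_eq_mul] at h2
      exact mul_right_cancel₀ (hxpos ⟨0, hn⟩).ne' h2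
    have hceq : c = specRad A :=
      (pow_left_strictMonoOn₀ hL.ne').injOn (Set.mem_setOf.mpr hcpos.le)
        (Set.mem_setOf.mpr hρpos.le) hcL
    intro i
    have h2 : rowSum (A ^ (k + 1)) i = c * rowSum (A ^ k) i := by
      rw [← hux i, hcu]; simp
    rw [h2, hceq, mul_div_assoc, div_self (hxpos i).ne', mul_one]
  -- the backward implication: all first ratios equal ρ implies all L-step ratios are ρ^L
  have backward : (∀ i, rowSum (A ^ (k + 1)) i / rowSum (A ^ k) i = specRad A) →
      ∀ i, (rowSum (A ^ (k + L)) i / rowSum (A ^ k) i) ^ ((L : ℝ))⁻¹ = specRad A := by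
    intro hall
    have hρpos : 0 < specRad A := by
      rw [← hall ⟨0, hn⟩]
      exact div_pos (rowSum_pow_pos hA hr _ _) (hxpos _)
    have hstep : ∀ t i, rowSum (A ^ (k + t)) i = specRad A ^ t * rowSum (A ^ k) i := by
      intro t
      induction t with
      | zero => intro i; simp
      | succ t ih =>
          intro i
          have h1 : A ^ (k + (t + 1)) = A * A ^ (k + t) := pow_succ' A (k + t)
          rw [h1, rowSum_mul]
          calc ∑ j, A i j * rowSum (A ^ (k + t)) j
              = specRad A ^ t * ∑ j, A i j * rowSum (A ^ k) j := by
                rw [Finset.mul_sum]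
                exact Finset.sum_congr rfl fun j _ => by rw [ih j]; ring
          _ = specRad A ^ t * rowSum (A ^ (k + 1)) i := by rw [← rowSum_mul, ← hAk1]
          _ = specRad A ^ t * (specRad A * rowSum (A ^ k) i) := by
                have h3 := hall i
                rw [div_eq_iff (hxpos i).ne'] at h3
                rw [h3]
          _ = specRad A ^ (t + 1) * rowSum (A ^ k) i := by ring
    intro i
    rw [hstep L i, mul_div_assoc, div_self (hxpos i).ne', mul_one,
      ← Real.rpow_natCast (specRad A) L, ← Real.rpow_mul hρpos.le,
      mul_inv_cancel₀ (Nat.cast_ne_zero.mpr hL.ne'), Real.rpow_one]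
  constructor
  · -- sup case
    constructor
    · intro heq
      obtain ⟨j₀, -, hj₀⟩ := Finset.exists_mem_eq_sup' (Finset.univ_nonempty (α := Fin n))
        (fun i => (rowSum (A ^ (k + L)) i / rowSum (A ^ k) i) ^ ((L : ℝ))⁻¹)
      have hρpos : 0 < specRad A := by
        rw [heq, hj₀]
        exact Real.rpow_pos_of_pos (hRpos j₀) _
      set M := Finset.univ.sup' Finset.univ_nonempty
        (fun i => rowSum (A ^ (k + L)) i / rowSum (A ^ k) i) with hM
      obtain ⟨j₁, -, hj₁⟩ := Finset.exists_mem_eq_sup' (Finset.univ_nonempty (α := Fin n))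
        (fun i => rowSum (A ^ (k + L)) i / rowSum (A ^ k) i)
      have hMpos : 0 < M := by rw [hM, hj₁]; exact hRpos j₁
      have hsup : Finset.univ.sup' Finset.univ_nonempty
          (fun i => (rowSum (A ^ (k + L)) i / rowSum (A ^ k) i) ^ ((L : ℝ))⁻¹)
          = M ^ ((L : ℝ))⁻¹ := by
        apply le_antisymm
        · apply Finset.sup'_le
          intro i _
          exact Real.rpow_le_rpow (hRpos i).le
            (Finset.le_sup' (fun i => rowSum (A ^ (k + L)) i / rowSum (A ^ k) i)
              (Finset.mem_univ i)) (by positivity)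
        · have h1 : M ^ ((L : ℝ))⁻¹
              = (rowSum (A ^ (k + L)) j₁ / rowSum (A ^ k) j₁) ^ ((L : ℝ))⁻¹ := by
            rw [hM, hj₁]
          rw [h1]
          exact Finset.le_sup'
            (fun i => (rowSum (A ^ (k + L)) i / rowSum (A ^ k) i) ^ ((L : ℝ))⁻¹)
            (Finset.mem_univ j₁)
      have hρL : specRad A ^ L = M := by
        rw [heq, hsup, ← Real.rpow_natCast (M ^ ((L : ℝ))⁻¹) L, ← Real.rpow_mul hMpos.le,
          inv_mul_cancel₀ (Nat.cast_ne_zero.mpr hL.ne'), Real.rpow_one]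
      by_cases hcase : (A ^ L).mulVec (fun j => rowSum (A ^ k) j)
          = (specRad A ^ L) • (fun j => rowSum (A ^ k) j)
      · exact core hρpos hcase
      · exfalso
        set y : Fin n → ℝ := M • (fun j => rowSum (A ^ k) j)
          - (A ^ L).mulVec (fun j => rowSum (A ^ k) j) with hy
        have hynn : ∀ i, 0 ≤ y i := by
          intro i
          simp only [hy, Pi.sub_apply, Pi.smul_apply, smul_eq_mul]
          rw [hBx i]
          have h1 : rowSum (A ^ (k + L)) i
              = (rowSum (A ^ (k + L)) i / rowSum (A ^ k) i) * rowSum (A ^ k) i :=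
            (div_mul_cancel₀ _ (hxpos i).ne').symm
          have h2 : rowSum (A ^ (k + L)) i / rowSum (A ^ k) i ≤ M :=
            Finset.le_sup' (fun i => rowSum (A ^ (k + L)) i / rowSum (A ^ k) i)
              (Finset.mem_univ i)
          have h3 := mul_le_mul_of_nonneg_right h2 (hxpos i).le
          rw [h1]
          linarith
        have hy0 : y ≠ 0 := by
          intro hc0
          apply hcase
          rw [hρL]
          rw [hy, sub_eq_zero] at hc0
          exact hc0.symm
        set z := ((1 + A ^ L) ^ (n - 1)).mulVec (fun j => rowSum (A ^ k) j) with hz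
        have hzpos : ∀ i, 0 < z i := fun i =>
          lt_of_lt_of_le (hxpos i) (le_onePlus_mulVec hBnn _ (fun j => (hxpos j).le) i)
        have hw := onePlus_pow_mulVec_pos hBnn hirr hynn hy0
        have hcommB : A ^ L * (1 + A ^ L) ^ (n - 1) = (1 + A ^ L) ^ (n - 1) * A ^ L :=
          (Commute.pow_right ((Commute.one_right (A ^ L)).add_right (Commute.refl (A ^ L)))
            (n - 1)).eq
        have hkey : ∀ i, (A ^ L).mulVec z i + ((1 + A ^ L) ^ (n - 1)).mulVec y i = M * z i := by
          have h1 : (A ^ L).mulVec z = ((1 + A ^ L) ^ (n - 1)).mulVec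
              ((A ^ L).mulVec (fun j => rowSum (A ^ k) j)) := by
            rw [hz, Matrix.mulVec_mulVec, hcommB, ← Matrix.mulVec_mulVec]
          have h2 : ((1 + A ^ L) ^ (n - 1)).mulVec
                ((A ^ L).mulVec (fun j => rowSum (A ^ k) j))
              + ((1 + A ^ L) ^ (n - 1)).mulVec y
              = ((1 + A ^ L) ^ (n - 1)).mulVec (M • (fun j => rowSum (A ^ k) j)) := by
            rw [← Matrix.mulVec_add]
            congr 1
            rw [hy]
            ext j
            simp
          intro i
          rw [h1]
          have h3 := congrFun h2 i
          simp only [Pi.add_apply] at h3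
          rw [h3, Matrix.mulVec_smul, hz]
          simp
        set cmax := Finset.univ.sup' Finset.univ_nonempty
          (fun i => (A ^ L).mulVec z i / z i) with hcm
        have hcub : ∀ i, (A ^ L).mulVec z i ≤ cmax * z i := by
          intro i
          have h1 : (A ^ L).mulVec z i / z i ≤ cmax :=
            Finset.le_sup' (fun i => (A ^ L).mulVec z i / z i) (Finset.mem_univ i)
          calc (A ^ L).mulVec z i = ((A ^ L).mulVec z i / z i) * z i :=
              (div_mul_cancel₀ _ (hzpos i).ne').symm
          _ ≤ cmax * z i := mul_le_mul_of_nonneg_right h1 (hzpos i).le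
        obtain ⟨j₂, -, hj₂⟩ := Finset.exists_mem_eq_sup' (Finset.univ_nonempty (α := Fin n))
          (fun i => (A ^ L).mulVec z i / z i)
        have hclt : cmax < M := by
          rw [hcm, hj₂, div_lt_iff₀ (hzpos j₂)]
          have h4 := hkey j₂
          have h5 := hw j₂
          linarith
        obtain ⟨μ₀, hμ₀, habs⟩ := hgreat.1
        have habs' : ‖μ₀‖ = specRad A ^ L := habs
        have h6 := abs_le_of_mulVec_le hBnn hzpos hcub hμ₀
        rw [habs', hρL] at h6
        linarith
    · intro hall
      have h1 : Finset.univ.sup' Finset.univ_nonempty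
          (fun i => (rowSum (A ^ (k + L)) i / rowSum (A ^ k) i) ^ ((L : ℝ))⁻¹)
          = Finset.univ.sup' Finset.univ_nonempty (fun _ : Fin n => specRad A) := by
        apply Finset.sup'_congr _ rfl
        intro i _
        exact backward hall i
      rw [h1, Finset.sup'_const]
  · -- inf case
    constructor
    · intro heq
      obtain ⟨j₀, -, hj₀⟩ := Finset.exists_mem_eq_inf' (Finset.univ_nonempty (α := Fin n))
        (fun i => (rowSum (A ^ (k + L)) i / rowSum (A ^ k) i) ^ ((L : ℝ))⁻¹)
      have hρpos : 0 < specRad A := by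
        rw [heq, hj₀]
        exact Real.rpow_pos_of_pos (hRpos j₀) _
      set m := Finset.univ.inf' Finset.univ_nonempty
        (fun i => rowSum (A ^ (k + L)) i / rowSum (A ^ k) i) with hm
      obtain ⟨j₁, -, hj₁⟩ := Finset.exists_mem_eq_inf' (Finset.univ_nonempty (α := Fin n))
        (fun i => rowSum (A ^ (k + L)) i / rowSum (A ^ k) i)
      have hmpos : 0 < m := by rw [hm, hj₁]; exact hRpos j₁
      have hinf : Finset.univ.inf' Finset.univ_nonempty
          (fun i => (rowSum (A ^ (k + L)) i / rowSum (A ^ k) i) ^ ((L : ℝ))⁻¹)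
          = m ^ ((L : ℝ))⁻¹ := by
        apply le_antisymm
        · have h1 : m ^ ((L : ℝ))⁻¹
              = (rowSum (A ^ (k + L)) j₁ / rowSum (A ^ k) j₁) ^ ((L : ℝ))⁻¹ := by
            rw [hm, hj₁]
          rw [h1]
          exact Finset.inf'_le
            (fun i => (rowSum (A ^ (k + L)) i / rowSum (A ^ k) i) ^ ((L : ℝ))⁻¹)
            (Finset.mem_univ j₁)
        · apply Finset.le_inf'
          intro i _
          exact Real.rpow_le_rpow hmpos.le
            (Finset.inf'_le (fun i => rowSum (A ^ (k + L)) i / rowSum (A ^ k) i)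
              (Finset.mem_univ i)) (by positivity)
      have hρL : specRad A ^ L = m := by
        rw [heq, hinf, ← Real.rpow_natCast (m ^ ((L : ℝ))⁻¹) L, ← Real.rpow_mul hmpos.le,
          inv_mul_cancel₀ (Nat.cast_ne_zero.mpr hL.ne'), Real.rpow_one]
      by_cases hcase : (A ^ L).mulVec (fun j => rowSum (A ^ k) j)
          = (specRad A ^ L) • (fun j => rowSum (A ^ k) j)
      · exact core hρpos hcase
      · exfalso
        set y : Fin n → ℝ := (A ^ L).mulVec (fun j => rowSum (A ^ k) j)
          - m • (fun j => rowSum (A ^ k) j) with hy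
        have hynn : ∀ i, 0 ≤ y i := by
          intro i
          simp only [hy, Pi.sub_apply, Pi.smul_apply, smul_eq_mul]
          rw [hBx i]
          have h1 : rowSum (A ^ (k + L)) i
              = (rowSum (A ^ (k + L)) i / rowSum (A ^ k) i) * rowSum (A ^ k) i :=
            (div_mul_cancel₀ _ (hxpos i).ne').symm
          have h2 : m ≤ rowSum (A ^ (k + L)) i / rowSum (A ^ k) i :=
            Finset.inf'_le (fun i => rowSum (A ^ (k + L)) i / rowSum (A ^ k) i)
              (Finset.mem_univ i)
          have h3 := mul_le_mul_of_nonneg_right h2 (hxpos i).le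
          rw [h1]
          linarith
        have hy0 : y ≠ 0 := by
          intro hc0
          apply hcase
          rw [hρL]
          rw [hy, sub_eq_zero] at hc0
          exact hc0
        set z := ((1 + A ^ L) ^ (n - 1)).mulVec (fun j => rowSum (A ^ k) j) with hz
        have hzpos : ∀ i, 0 < z i := fun i =>
          lt_of_lt_of_le (hxpos i) (le_onePlus_mulVec hBnn _ (fun j => (hxpos j).le) i)
        have hw := onePlus_pow_mulVec_pos hBnn hirr hynn hy0
        have hcommB : A ^ L * (1 + A ^ L) ^ (n - 1) = (1 + A ^ L) ^ (n - 1) * A ^ L :=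
          (Commute.pow_right ((Commute.one_right (A ^ L)).add_right (Commute.refl (A ^ L)))
            (n - 1)).eq
        have hkey : ∀ i, (A ^ L).mulVec z i = m * z i + ((1 + A ^ L) ^ (n - 1)).mulVec y i := by
          have h1 : (A ^ L).mulVec z = ((1 + A ^ L) ^ (n - 1)).mulVec
              ((A ^ L).mulVec (fun j => rowSum (A ^ k) j)) := by
            rw [hz, Matrix.mulVec_mulVec, hcommB, ← Matrix.mulVec_mulVec]
          have h2 : ((1 + A ^ L) ^ (n - 1)).mulVec (m • (fun j => rowSum (A ^ k) j))
              + ((1 + A ^ L) ^ (n - 1)).mulVec y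
              = ((1 + A ^ L) ^ (n - 1)).mulVec
                  ((A ^ L).mulVec (fun j => rowSum (A ^ k) j)) := by
            rw [← Matrix.mulVec_add]
            congr 1
            rw [hy]
            ext j
            simp
          intro i
          rw [h1]
          have h3 := congrFun h2 i
          simp only [Pi.add_apply] at h3
          rw [← h3, Matrix.mulVec_smul, hz]
          simp
        set cmin := Finset.univ.inf' Finset.univ_nonempty
          (fun i => (A ^ L).mulVec z i / z i) with hcm
        have hclb : ∀ i, cmin * z i ≤ (A ^ L).mulVec z i := by
          intro i
          have h1 : cmin ≤ (A ^ L).mulVec z i / z i :=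
            Finset.inf'_le (fun i => (A ^ L).mulVec z i / z i) (Finset.mem_univ i)
          calc cmin * z i ≤ ((A ^ L).mulVec z i / z i) * z i :=
              mul_le_mul_of_nonneg_right h1 (hzpos i).le
          _ = (A ^ L).mulVec z i := div_mul_cancel₀ _ (hzpos i).ne'
        obtain ⟨j₂, -, hj₂⟩ := Finset.exists_mem_eq_inf' (Finset.univ_nonempty (α := Fin n))
          (fun i => (A ^ L).mulVec z i / z i)
        have hcgt : m < cmin := by
          rw [hcm, hj₂, lt_div_iff₀ (hzpos j₂)]
          have h4 := hkey j₂
          have h5 := hw j₂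
          linarith
        have hcmin0 : 0 ≤ cmin := by
          have : 0 < specRad A ^ L := pow_pos hρpos L
          rw [hρL] at this
          linarith
        have h6 := le_greatest_of_mulVec_ge hBnn hzpos hcmin0 hclb hgreat
        rw [hρL] at h6
        linarith
    · intro hall
      have h1 : Finset.univ.inf' Finset.univ_nonempty
          (fun i => (rowSum (A ^ (k + L)) i / rowSum (A ^ k) i) ^ ((L : ℝ))⁻¹)
          = Finset.univ.inf' Finset.univ_nonempty (fun _ : Fin n => specRad A) := by
        apply Finset.inf'_congr _ rfl
        intro i _
        exact backward hall i
      rw [h1, Finset.inf'_const]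
end

section
/- Let A be an n×n nonnegative real matrix with all row sums nonzero, and let M > 0, N ≥ 0, k ≥ 0 be integers. Then the row-sum bound of order M+N is at least as tight as the Xu–Xu-type product bound: max_{1≤i≤n} r_i(A^{k+M+N}) / r_i(A^k) ≤ max over pairs (i,j) with a_{ij}^{(M)} > 0 of ( r_i(A^{k+M}) r_j(A^{k+N}) ) / ( r_i(A^k) r_j(A^k) ), and symmetrically min_{1≤i≤n} r_i(A^{k+M+N}) / r_i(A^k) ≥ min over pairs (i,j) with a_{ij}^{(M)} > 0 of ( r_i(A^{k+M}) r_j(A^{k+N}) ) / ( r_i(A^k) r_j(A^k) ). -/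
open Matrix

lemma rowSum_mul {n : ℕ} (B C : Matrix (Fin n) (Fin n) ℝ) (i : Fin n) :
    rowSum (B * C) i = ∑ j, B i j * rowSum C j := by
  simp only [rowSum, Matrix.mul_apply, Finset.mul_sum]
  exact Finset.sum_comm

lemma pow_entry_nonneg {n : ℕ} (A : Matrix (Fin n) (Fin n) ℝ)
    (hA : ∀ i j, 0 ≤ A i j) : ∀ m i j, 0 ≤ (A ^ m) i j := by
  intro m
  induction m with
  | zero => intro i j; simp [Matrix.one_apply]; split <;> norm_num
  | succ m ih =>
    intro i j
    rw [pow_succ, Matrix.mul_apply]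
    exact Finset.sum_nonneg fun l _ => mul_nonneg (ih i l) (hA l j)

lemma rowSum_pow_pos {n : ℕ} (A : Matrix (Fin n) (Fin n) ℝ)
    (hA : ∀ i j, 0 ≤ A i j) (hr : ∀ i, rowSum A i ≠ 0) :
    ∀ m i, 0 < rowSum (A ^ m) i := by
  intro m
  induction m with
  | zero => intro i; simp [rowSum, Matrix.one_apply]
  | succ m ih =>
    intro i
    rw [pow_succ', rowSum_mul]
    have : ∃ j, 0 < A i j := by
      by_contra h
      push_neg at h
      have : rowSum A i = 0 := Finset.sum_eq_zero fun j _ => le_antisymm (h j) (hA i j)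
      exact hr i this
    obtain ⟨j, hj⟩ := this
    exact Finset.sum_pos' (fun l _ => mul_nonneg (hA i l) (ih l).le)
      ⟨j, Finset.mem_univ j, mul_pos hj (ih j)⟩


/-- remark after Theorem 7 of the paper.
For a nonnegative matrix `A` with nonzero row sums and `M > 0`, `N ≥ 0`, `k ≥ 0`, the
order-`(M+N)` row-sum bound is at least as tight as the Xu–Xu-type product bound:
`max_i r_i(A^{k+M+N})/r_i(A^k)` is at most the max over pairs `(i,j)` with
`(A^M)_{ij} > 0` of `r_i(A^{k+M}) r_j(A^{k+N}) / (r_i(A^k) r_j(A^k))`, and symmetrically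
for the minima. -/
theorem stmt14 {n : ℕ} [NeZero n] (A : Matrix (Fin n) (Fin n) ℝ)
    (hA : ∀ i j, 0 ≤ A i j) (hr : ∀ i, rowSum A i ≠ 0) (M N k : ℕ) (hM : 0 < M) :
    Finset.univ.sup' Finset.univ_nonempty
        (fun i => rowSum (A ^ (k + M + N)) i / rowSum (A ^ k) i) ≤
      sSup {x : ℝ | ∃ i j : Fin n, 0 < (A ^ M) i j ∧
        x = rowSum (A ^ (k + M)) i * rowSum (A ^ (k + N)) j /
              (rowSum (A ^ k) i * rowSum (A ^ k) j)} ∧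
    sInf {x : ℝ | ∃ i j : Fin n, 0 < (A ^ M) i j ∧
        x = rowSum (A ^ (k + M)) i * rowSum (A ^ (k + N)) j /
              (rowSum (A ^ k) i * rowSum (A ^ k) j)} ≤
      Finset.univ.inf' Finset.univ_nonempty
        (fun i => rowSum (A ^ (k + M + N)) i / rowSum (A ^ k) i) := by
  have hpos := rowSum_pow_pos A hA hr
  have hent := pow_entry_nonneg A hA
  set S : Set ℝ := {x : ℝ | ∃ i j : Fin n, 0 < (A ^ M) i j ∧
        x = rowSum (A ^ (k + M)) i * rowSum (A ^ (k + N)) j /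
              (rowSum (A ^ k) i * rowSum (A ^ k) j)} with hS
  -- S is finite
  have hSfin : S.Finite := by
    apply Set.Finite.subset (Set.finite_range
      (fun p : Fin n × Fin n => rowSum (A ^ (k + M)) p.1 * rowSum (A ^ (k + N)) p.2 /
        (rowSum (A ^ k) p.1 * rowSum (A ^ k) p.2)))
    rintro x ⟨i, j, -, rfl⟩
    exact ⟨(i, j), rfl⟩
  have hbddA : BddAbove S := hSfin.bddAbove
  have hbddB : BddBelow S := hSfin.bddBelow
  -- for each i, a row j with positive entry of A^M
  have hexj : ∀ i : Fin n, ∃ j, 0 < (A ^ M) i j := by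
    intro i
    by_contra h
    push_neg at h
    have : rowSum (A ^ M) i = 0 :=
      Finset.sum_eq_zero fun j _ => le_antisymm (h j) (hent M i j)
    exact (hpos M i).ne' this
  -- key decompositions
  have h1 : ∀ i, rowSum (A ^ (k + M + N)) i = ∑ j, (A ^ M) i j * rowSum (A ^ (k + N)) j := by
    intro i
    rw [show k + M + N = M + (k + N) by ring, pow_add, rowSum_mul]
  have h2 : ∀ i, rowSum (A ^ (k + M)) i = ∑ j, (A ^ M) i j * rowSum (A ^ k) j := by
    intro i
    rw [show k + M = M + k by ring, pow_add, rowSum_mul]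
  set g : Fin n → ℝ := fun j => rowSum (A ^ (k + N)) j / rowSum (A ^ k) j with hg
  have hgj : ∀ j, g j * rowSum (A ^ k) j = rowSum (A ^ (k + N)) j := fun j =>
    div_mul_cancel₀ _ (hpos k j).ne'
  constructor
  · apply Finset.sup'_le
    intro i _
    set T : Finset (Fin n) := Finset.univ.filter (fun j => 0 < (A ^ M) i j) with hT
    have hTne : T.Nonempty := by
      obtain ⟨j, hj⟩ := hexj i
      exact ⟨j, Finset.mem_filter.mpr ⟨Finset.mem_univ j, hj⟩⟩
    obtain ⟨j₀, hj₀T, hj₀max⟩ := T.exists_max_image g hTne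
    have hj₀pos : 0 < (A ^ M) i j₀ := (Finset.mem_filter.mp hj₀T).2
    have key : rowSum (A ^ (k + M + N)) i ≤ g j₀ * rowSum (A ^ (k + M)) i := by
      rw [h1, h2, Finset.mul_sum]
      apply Finset.sum_le_sum
      intro j _
      rcases eq_or_lt_of_le (hent M i j) with h0 | h0
      · rw [← h0]; ring_nf; simp
      · have hjT : j ∈ T := Finset.mem_filter.mpr ⟨Finset.mem_univ j, h0⟩
        calc (A ^ M) i j * rowSum (A ^ (k + N)) j
            = (A ^ M) i j * (g j * rowSum (A ^ k) j) := by rw [hgj]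
          _ ≤ (A ^ M) i j * (g j₀ * rowSum (A ^ k) j) := by
              apply mul_le_mul_of_nonneg_left _ h0.le
              exact mul_le_mul_of_nonneg_right (hj₀max j hjT) (hpos k j).le
          _ = g j₀ * ((A ^ M) i j * rowSum (A ^ k) j) := by ring
    have : rowSum (A ^ (k + M + N)) i / rowSum (A ^ k) i ≤
        rowSum (A ^ (k + M)) i * rowSum (A ^ (k + N)) j₀ /
          (rowSum (A ^ k) i * rowSum (A ^ k) j₀) := by
      have h3 : rowSum (A ^ (k + M + N)) i / rowSum (A ^ k) i ≤
          g j₀ * rowSum (A ^ (k + M)) i / rowSum (A ^ k) i :=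
        (div_le_div_iff_of_pos_right (hpos k i)).mpr key
      have h4 : g j₀ * rowSum (A ^ (k + M)) i / rowSum (A ^ k) i =
          rowSum (A ^ (k + M)) i * rowSum (A ^ (k + N)) j₀ /
            (rowSum (A ^ k) i * rowSum (A ^ k) j₀) := by
        have hki := (hpos k i).ne'
        have hkj := (hpos k j₀).ne'
        rw [hg]
        field_simp
      rw [← h4]; exact h3
    exact le_trans this (le_csSup hbddA ⟨i, j₀, hj₀pos, rfl⟩)
  · apply Finset.le_inf'
    intro i _
    set T : Finset (Fin n) := Finset.univ.filter (fun j => 0 < (A ^ M) i j) with hT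
    have hTne : T.Nonempty := by
      obtain ⟨j, hj⟩ := hexj i
      exact ⟨j, Finset.mem_filter.mpr ⟨Finset.mem_univ j, hj⟩⟩
    obtain ⟨j₀, hj₀T, hj₀min⟩ := T.exists_min_image g hTne
    have hj₀pos : 0 < (A ^ M) i j₀ := (Finset.mem_filter.mp hj₀T).2
    have key : g j₀ * rowSum (A ^ (k + M)) i ≤ rowSum (A ^ (k + M + N)) i := by
      rw [h1, h2, Finset.mul_sum]
      apply Finset.sum_le_sum
      intro j _
      rcases eq_or_lt_of_le (hent M i j) with h0 | h0
      · rw [← h0]; ring_nf; simp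
      · have hjT : j ∈ T := Finset.mem_filter.mpr ⟨Finset.mem_univ j, h0⟩
        calc g j₀ * ((A ^ M) i j * rowSum (A ^ k) j)
            = (A ^ M) i j * (g j₀ * rowSum (A ^ k) j) := by ring
          _ ≤ (A ^ M) i j * (g j * rowSum (A ^ k) j) := by
              apply mul_le_mul_of_nonneg_left _ h0.le
              exact mul_le_mul_of_nonneg_right (hj₀min j hjT) (hpos k j).le
          _ = (A ^ M) i j * rowSum (A ^ (k + N)) j := by rw [hgj]
    have : rowSum (A ^ (k + M)) i * rowSum (A ^ (k + N)) j₀ /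
          (rowSum (A ^ k) i * rowSum (A ^ k) j₀) ≤
        rowSum (A ^ (k + M + N)) i / rowSum (A ^ k) i := by
      have h3 : g j₀ * rowSum (A ^ (k + M)) i / rowSum (A ^ k) i ≤
          rowSum (A ^ (k + M + N)) i / rowSum (A ^ k) i :=
        (div_le_div_iff_of_pos_right (hpos k i)).mpr key
      have h4 : g j₀ * rowSum (A ^ (k + M)) i / rowSum (A ^ k) i =
          rowSum (A ^ (k + M)) i * rowSum (A ^ (k + N)) j₀ /
            (rowSum (A ^ k) i * rowSum (A ^ k) j₀) := by
        have hki := (hpos k i).ne'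
        have hkj := (hpos k j₀).ne'
        rw [hg]
        field_simp
      rw [← h4]; exact h3
    exact le_trans (csInf_le hbddB ⟨i, j₀, hj₀pos, rfl⟩) this
end

section
/- Let A be an n×n irreducible matrix with nonnegative integer entries and all row sums nonzero, and let k ≥ 0 be an integer. If the vector x = (r_1(A^k),…,r_n(A^k))ᵀ is an eigenvector of A (necessarily corresponding to ρ(A)), then the spectral radius ρ(A) is a nonnegative integer. -/
open Matrix

/-- part of Corollary 2 of the paper, irreducible-power case.
Let `A` be an `n × n` irreducible matrix with nonnegative integer entries and all row sums
nonzero, and let `k ≥ 0`. If `x = (r_1(A^k),…,r_n(A^k))ᵀ` is an eigenvector of `A`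
(necessarily corresponding to `ρ(A)`), then `ρ(A)` is a nonnegative integer. -/
theorem stmt16 {n : ℕ} (A : Matrix (Fin n) (Fin n) ℝ)
    (hint : ∀ i j, ∃ z : ℕ, A i j = (z : ℝ)) (hirr : IsIrred A)
    (hr : ∀ i, rowSum A i ≠ 0) (k : ℕ)
    (hx : ∃ μ : ℝ, A.mulVec (fun i => rowSum (A ^ k) i) = μ • fun i => rowSum (A ^ k) i) :
    ∃ z : ℕ, specRad A = (z : ℝ) := by
  rcases Nat.eq_zero_or_pos n with hn | hn
  · subst hn
    refine ⟨0, ?_⟩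
    have hsp : spectrum ℂ (A.map (fun x : ℝ => (x : ℂ))) = ∅ := by
      ext μ
      simp [spectrum.mem_iff, isUnit_of_subsingleton]
    simp [specRad, hsp, Real.sSup_empty]
  obtain ⟨μ, hμ⟩ := hx
  choose B hB using hint
  set Bm : Matrix (Fin n) (Fin n) ℕ := Matrix.of B with hBm
  have hA : A = Bm.map (fun z : ℕ => (z : ℝ)) := by
    ext i j; simp [hB, hBm, Matrix.map_apply]
  have hpow : ∀ m, A ^ m = (Bm ^ m).map (fun z : ℕ => (z : ℝ)) := by
    intro m
    rw [hA]
    have := map_pow ((Nat.castRingHom ℝ).mapMatrix) Bm m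
    simpa [RingHom.mapMatrix_apply] using this.symm
  set c : ℕ → Fin n → ℕ := fun m i => ∑ j, (Bm ^ m) i j with hc
  have hrs : ∀ m i, rowSum (A ^ m) i = (c m i : ℝ) := by
    intro m i
    simp [rowSum, hpow, hc, Matrix.map_apply]
  -- positivity of c
  have hA1 : ∀ i, ∃ l, Bm i l ≠ 0 := by
    intro i
    by_contra h
    push_neg at h
    apply hr i
    rw [hA]
    simp [rowSum, Matrix.map_apply, h]
  have hcpos : ∀ m i, 0 < c m i := by
    intro m
    induction m with
    | zero => intro i; simp [hc, Matrix.one_apply]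
    | succ m ih =>
      intro i
      have hstep : c (m + 1) i = ∑ l, Bm i l * c m l := by
        simp only [hc, pow_succ', Matrix.mul_apply]
        rw [Finset.sum_comm]
        simp [Finset.mul_sum]
      rw [hstep]
      obtain ⟨l, hl⟩ := hA1 i
      refine Finset.sum_pos' (fun j _ => Nat.zero_le _) ⟨l, Finset.mem_univ l, ?_⟩
      exact Nat.mul_pos (Nat.pos_of_ne_zero hl) (ih l)
  -- eigen equation with c k
  set x' : Fin n → ℝ := fun i => (c k i : ℝ) with hx'
  have hμ' : A *ᵥ x' = μ • x' := by
    have : (fun i => rowSum (A ^ k) i) = x' := by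
      funext i; exact hrs k i
    rwa [this] at hμ
  have heig : ∀ m, (A ^ m) *ᵥ x' = (μ ^ m) • x' := by
    intro m
    induction m with
    | zero => simp
    | succ m ih =>
      rw [pow_succ', ← Matrix.mulVec_mulVec, ih, Matrix.mulVec_smul, hμ', smul_smul,
        ← pow_succ]
  have key : ∀ m i, μ ^ m * (c k i : ℝ) = (c (m + k) i : ℝ) := by
    intro m i
    have h1 : ((A ^ m) *ᵥ x') i = μ ^ m * (c k i : ℝ) := by
      rw [heig m]; simp [hx']
    have h2 : ((A ^ m) *ᵥ x') i = ((∑ j, (Bm ^ m) i j * c k j : ℕ) : ℝ) := by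
      simp [Matrix.mulVec, dotProduct, hpow, Matrix.map_apply, hx']
    have h3 : (∑ j, (Bm ^ m) i j * c k j) = c (m + k) i := by
      simp only [hc, pow_add, Matrix.mul_apply, Finset.mul_sum]
      rw [Finset.sum_comm]
    rw [← h1, h2, h3]
  set i0 : Fin n := ⟨0, hn⟩ with hi0
  set a : ℕ := c k i0 with ha
  have hapos : 0 < a := hcpos k i0
  -- μ is rational
  set q : ℚ := (c (1 + k) i0 : ℚ) / (a : ℚ) with hq
  have hμq : μ = (q : ℝ) := by
    have := key 1 i0
    rw [pow_one] at this
    have ha' : (a : ℝ) ≠ 0 := by positivity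
    rw [hq]
    push_cast
    field_simp
    linarith [this]
  have hqm : ∀ m, (q : ℚ) ^ m * (a : ℚ) = (c (m + k) i0 : ℚ) := by
    intro m
    have := key m i0
    rw [hμq] at this
    exact_mod_cast this
  -- q has denominator 1
  have hdvd : ∀ m, q.den ^ m ∣ a := by
    intro m
    have h1 : (q.num : ℚ) ^ m * (a : ℚ) = (c (m + k) i0 : ℚ) * (q.den : ℚ) ^ m := by
      have hd : ((q.den : ℚ)) ≠ 0 := by positivity
      have := hqm m
      have hqnd : (q.num : ℚ) / (q.den : ℚ) = q := Rat.num_div_den q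
      rw [← hqnd] at this
      rw [div_pow, div_mul_eq_mul_div, div_eq_iff (pow_ne_zero _ hd)] at this
      linarith [this]
    have h2 : q.num ^ m * (a : ℤ) = (c (m + k) i0 : ℤ) * (q.den : ℤ) ^ m := by
      exact_mod_cast h1
    have h3 : ((q.den : ℤ)) ^ m ∣ q.num ^ m * (a : ℤ) := ⟨(c (m + k) i0 : ℤ), by linarith [h2]⟩
    have h4 : q.den ^ m ∣ q.num.natAbs ^ m * a := by
      have := Int.natAbs_dvd_natAbs.mpr h3
      simpa [Int.natAbs_mul, Int.natAbs_pow] using this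
    exact (Nat.Coprime.pow m m (Nat.Coprime.symm q.reduced)).dvd_of_dvd_mul_left h4
  have hden : q.den = 1 := by
    by_contra h
    have h2 : 2 ≤ q.den := by have := q.pos; omega
    have h5 := Nat.le_of_dvd hapos (hdvd a)
    have h3 : a < 2 ^ a := Nat.lt_two_pow_self
    have h4 : 2 ^ a ≤ q.den ^ a := Nat.pow_le_pow_left h2 a
    exact absurd (lt_of_lt_of_le h3 (le_trans h4 h5)) (lt_irrefl a)
  have hμ0 : 0 ≤ μ := by
    have h1 := key 1 i0
    rw [pow_one] at h1
    have hb : (0:ℝ) < (c k i0 : ℝ) := by exact_mod_cast hcpos k i0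
    have hc' : (0:ℝ) ≤ (c (1 + k) i0 : ℝ) := Nat.cast_nonneg _
    nlinarith
  have hq0 : 0 ≤ q := by
    have : (0:ℝ) ≤ (q:ℝ) := hμq ▸ hμ0
    exact_mod_cast this
  have hqnum : 0 ≤ q.num := Rat.num_nonneg.mpr hq0
  refine ⟨q.num.toNat, ?_⟩
  have hμnat : μ = (q.num.toNat : ℝ) := by
    rw [hμq]
    have h1 : ((q.num.toNat : ℤ)) = q.num := Int.toNat_of_nonneg hqnum
    have h2 : ((q.num : ℚ)) = q := by
      conv_rhs => rw [← Rat.num_div_den q]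
      rw [hden]
      simp
    have h3 : ((q.num.toNat : ℚ)) = q := by
      rw [← h2]
      exact_mod_cast congrArg (Int.cast : ℤ → ℚ) h1
    exact_mod_cast h3.symm
  rw [← hμnat]
  -- now prove specRad A = μ
  haveI : Nonempty (Fin n) := Fin.pos_iff_nonempty.mp hn
  set M : Matrix (Fin n) (Fin n) ℂ := A.map (fun x : ℝ => (x : ℂ)) with hM
  set f : Module.End ℂ (Fin n → ℂ) := Matrix.toLinAlgEquiv' M with hf
  have hspec : spectrum ℂ M = spectrum ℂ f := (AlgEquiv.spectrum_eq Matrix.toLinAlgEquiv' M).symm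
  have hxpos : ∀ i, 0 < x' i := fun i => by
    have := hcpos k i
    simp only [hx']
    exact_mod_cast this
  set w : Fin n → ℂ := fun i => ((x' i : ℝ) : ℂ) with hw
  have hw0 : w ≠ 0 := by
    intro h
    have h1 := congrFun h i0
    simp only [hw, Pi.zero_apply, Complex.ofReal_eq_zero] at h1
    exact absurd h1 (ne_of_gt (hxpos i0))
  have hAeq : ∀ i, ∑ j, A i j * x' j = μ * x' i := by
    intro i
    have := congrFun hμ' i
    simpa [Matrix.mulVec, dotProduct] using this
  have hMw : M *ᵥ w = ((μ : ℂ)) • w := by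
    funext i
    show ∑ j, M i j * w j = (μ : ℂ) * w i
    simp only [hM, hw, Matrix.map_apply]
    exact_mod_cast congrArg (Complex.ofReal) (hAeq i)
  have hμmem : ((μ : ℝ) : ℂ) ∈ spectrum ℂ M := by
    rw [hspec]
    refine Module.End.hasEigenvalue_iff_mem_spectrum.mp
      (Module.End.hasEigenvalue_of_hasEigenvector ⟨Module.End.mem_eigenspace_iff.mpr ?_, hw0⟩)
    rw [hf, Matrix.toLinAlgEquiv'_apply]
    exact hMw
  have hAnn : ∀ i j, 0 ≤ A i j := fun i j => by rw [hB i j]; positivity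
  have hub : ∀ s ∈ (fun ν : ℂ => ‖ν‖) '' spectrum ℂ M, s ≤ μ := by
    rintro s ⟨lam, hlam, rfl⟩
    rw [hspec] at hlam
    obtain ⟨v, hv⟩ := (Module.End.hasEigenvalue_iff_mem_spectrum.mpr hlam).exists_hasEigenvector
    have hv0 : v ≠ 0 := hv.2
    have hveq : M *ᵥ v = lam • v := by
      have h := Module.End.mem_eigenspace_iff.mp hv.1
      rwa [hf, Matrix.toLinAlgEquiv'_apply] at h
    obtain ⟨i1, hi1⟩ := Finite.exists_max (fun i => ‖v i‖ / (x' i))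
    set t : ℝ := ‖v i1‖ / x' i1 with htdef
    have htpos : 0 < t := by
      obtain ⟨j, hj⟩ : ∃ j, v j ≠ 0 := by
        by_contra h
        push_neg at h
        exact hv0 (funext fun j => h j)
      have hjpos : 0 < ‖v j‖ / x' j :=
        div_pos (by simpa using hj) (hxpos j)
      exact lt_of_lt_of_le hjpos (hi1 j)
    have hbound : ∀ j, ‖v j‖ ≤ t * x' j := by
      intro j
      have := hi1 j
      rw [div_le_iff₀ (hxpos j)] at this
      linarith [this]
    have h5 : ‖v i1‖ = t * x' i1 := by
      rw [htdef, div_mul_cancel₀]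
      exact ne_of_gt (hxpos i1)
    have h1 : ‖lam‖ * ‖v i1‖ = ‖(M *ᵥ v) i1‖ := by
      rw [hveq]
      simp [norm_mul]
    have h2 : ‖(M *ᵥ v) i1‖ ≤ ∑ j, A i1 j * ‖v j‖ := by
      have habs : ‖∑ j, M i1 j * v j‖ ≤ ∑ j, ‖M i1 j * v j‖ :=
        norm_sum_le _ _
      have heq : ∀ j, ‖M i1 j * v j‖ = A i1 j * ‖v j‖ := by
        intro j
        rw [norm_mul]
        congr 1
        simp only [hM, Matrix.map_apply, Complex.norm_real, Real.norm_eq_abs]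
        exact abs_of_nonneg (hAnn i1 j)
      calc ‖(M *ᵥ v) i1‖ = ‖∑ j, M i1 j * v j‖ := rfl
        _ ≤ ∑ j, ‖M i1 j * v j‖ := habs
        _ = ∑ j, A i1 j * ‖v j‖ := Finset.sum_congr rfl fun j _ => heq j
    have h3 : ∑ j, A i1 j * ‖v j‖ ≤ ∑ j, A i1 j * (t * x' j) :=
      Finset.sum_le_sum fun j _ => mul_le_mul_of_nonneg_left (hbound j) (hAnn i1 j)
    have h4 : ∑ j, A i1 j * (t * x' j) = t * (μ * x' i1) := by
      have hsum : ∑ j, A i1 j * (t * x' j) = t * ∑ j, A i1 j * x' j := by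
        rw [Finset.mul_sum]
        exact Finset.sum_congr rfl fun j _ => by ring
      rw [hsum, hAeq i1]
    have hfin : ‖lam‖ * (t * x' i1) ≤ t * (μ * x' i1) := by
      rw [← h5]
      calc ‖lam‖ * ‖v i1‖ = ‖(M *ᵥ v) i1‖ := h1
        _ ≤ ∑ j, A i1 j * ‖v j‖ := h2
        _ ≤ ∑ j, A i1 j * (t * x' j) := h3
        _ = t * (μ * x' i1) := h4
    have := mul_pos htpos (hxpos i1)
    nlinarith [hfin, this]
  have hgreat : IsGreatest ((fun ν : ℂ => ‖ν‖) '' spectrum ℂ M) μ :=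
    ⟨⟨((μ : ℝ) : ℂ), hμmem, by simp [Complex.norm_real, abs_of_nonneg hμ0]⟩, hub⟩
  show sSup ((fun ν : ℂ => ‖ν‖) '' spectrum ℂ (A.map (fun x : ℝ => (x : ℂ)))) = μ
  rw [← hM]
  exact hgreat.csSup_eq
end

section
/- Let A = (a_{ij}) be an n×n irreducible matrix with nonnegative integer entries and all row sums nonzero, let r ≥ 1 and k ≥ 0 be integers, and suppose there is a map m from {1,…,n} to the integers modulo r such that a_{ij} > 0 implies m(j) ≡ m(i) + 1 (mod r). If there exist positive constants c_1,…,c_r such that r_i(A^{k+1}) / r_i(A^k) = c_{m(i)} for every i ∈ {1,…,n}, then ρ(A)^r is a nonnegative integer. -/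
open Matrix
open Polynomial

lemma aux_mem_spec_iff_det {n : ℕ} (M : Matrix (Fin n) (Fin n) ℂ) (μ : ℂ) :
    μ ∈ spectrum ℂ M ↔ (M - μ • 1).det = 0 := by
  rw [spectrum.mem_iff, Matrix.isUnit_iff_isUnit_det, isUnit_iff_ne_zero, not_not,
    Algebra.algebraMap_eq_smul_one]
  constructor
  · intro h
    have : M - μ • 1 = -(μ • 1 - M) := by rw [neg_sub]
    rw [this, Matrix.det_neg, h, mul_zero]
  · intro h
    have : μ • (1 : Matrix (Fin n) (Fin n) ℂ) - M = -(M - μ • 1) := by rw [neg_sub]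
    rw [this, Matrix.det_neg, h, mul_zero]

lemma aux_mem_spec_iff_eigen {n : ℕ} (M : Matrix (Fin n) (Fin n) ℂ) (μ : ℂ) :
    μ ∈ spectrum ℂ M ↔ ∃ w, w ≠ 0 ∧ M *ᵥ w = μ • w := by
  rw [aux_mem_spec_iff_det, ← Matrix.exists_mulVec_eq_zero_iff]
  apply exists_congr; intro w
  apply and_congr_right; intro _
  rw [Matrix.sub_mulVec, Matrix.smul_mulVec, Matrix.one_mulVec, sub_eq_zero]


lemma aux_pow_mem_spec {n : ℕ} (M : Matrix (Fin n) (Fin n) ℂ) (μ : ℂ)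
    (h : μ ∈ spectrum ℂ M) (r : ℕ) : μ ^ r ∈ spectrum ℂ (M ^ r) := by
  rw [aux_mem_spec_iff_eigen] at h ⊢
  obtain ⟨w, hw0, hw⟩ := h
  refine ⟨w, hw0, ?_⟩
  induction r with
  | zero => simp
  | succ s ih =>
    rw [pow_succ, pow_succ, ← Matrix.mulVec_mulVec, hw, Matrix.mulVec_smul, ih,
      smul_smul, mul_comm μ (μ ^ s)]


lemma aux_root_of_pow_mem {n r : ℕ} (hr : 1 ≤ r) (M : Matrix (Fin n) (Fin n) ℂ) (μ : ℂ)
    (h : μ ∈ spectrum ℂ (M ^ r)) : ∃ ζ : ℂ, ζ ∈ spectrum ℂ M ∧ ζ ^ r = μ := by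
  rw [aux_mem_spec_iff_det] at h
  set p : ℂ[X] := X ^ r - C μ with hp
  have hpm : p.Monic := Polynomial.monic_X_pow_sub_C μ (by omega)
  have hps : p = (Multiset.map (fun a => X - C a) p.roots).prod :=
    (IsAlgClosed.splits p).eq_prod_roots_of_monic hpm
  obtain ⟨l, hroots⟩ : ∃ l : List ℂ, p.roots = ↑l := ⟨p.roots.toList, (Multiset.coe_toList _).symm⟩
  rw [hroots, Multiset.map_coe, Multiset.prod_coe] at hps
  have haev : Polynomial.aeval M p = M ^ r - μ • 1 := by
    simp [hp, Algebra.algebraMap_eq_smul_one]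
  have haev2 : Polynomial.aeval M p = (l.map (fun a => M - a • 1)).prod := by
    conv_lhs => rw [hps]
    rw [map_list_prod]
    congr 1
    simp [Function.comp, Algebra.algebraMap_eq_smul_one]
  have h2 : ((l.map (fun a => M - a • 1)).prod).det = 0 := by rw [← haev2, haev, h]
  have h3 := map_list_prod (Matrix.detMonoidHom (n := Fin n) (R := ℂ))
      (l.map (fun a => M - a • 1))
  simp only [Matrix.coe_detMonoidHom, List.map_map, Function.comp_def] at h3
  rw [h3] at h2
  have h4 : (0 : ℂ) ∈ l.map (fun a => (M - a • 1).det) := by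
    rw [← List.prod_eq_zero_iff]
    exact h2
  obtain ⟨a, ha, hd0⟩ := List.mem_map.mp h4
  refine ⟨a, (aux_mem_spec_iff_det M a).mpr hd0, ?_⟩
  have ham : a ∈ p.roots := by rw [hroots]; exact_mod_cast ha
  have := Polynomial.isRoot_of_mem_roots ham
  simp [hp, Polynomial.IsRoot] at this
  linear_combination this

lemma aux_map_mulVec_cast {n : ℕ} (B : Matrix (Fin n) (Fin n) ℝ) (v : Fin n → ℝ) :
    (B.map (fun x : ℝ => (x : ℂ))) *ᵥ (fun i => (v i : ℂ)) = fun i => ((B *ᵥ v) i : ℂ) := by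
  funext i
  simp [Matrix.mulVec, dotProduct, Matrix.map]

lemma aux_real_mem_spec {n : ℕ} (B : Matrix (Fin n) (Fin n) ℝ) (v : Fin n → ℝ)
    (hv : v ≠ 0) (Cst : ℝ) (hBv : B *ᵥ v = Cst • v) :
    (Cst : ℂ) ∈ spectrum ℂ (B.map (fun x : ℝ => (x : ℂ))) := by
  rw [aux_mem_spec_iff_eigen]
  refine ⟨fun i => (v i : ℂ), ?_, ?_⟩
  · intro h
    apply hv
    funext i
    have := congrFun h i
    simpa using this
  · rw [aux_map_mulVec_cast, hBv]
    funext i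
    simp

lemma aux_perron_bound {n : ℕ} (B : Matrix (Fin n) (Fin n) ℝ) (hB : ∀ i j, 0 ≤ B i j)
    (v : Fin n → ℝ) (hv : ∀ i, 0 < v i) (Cst : ℝ) (hBv : B *ᵥ v = Cst • v)
    (μ : ℂ) (hμ : μ ∈ spectrum ℂ (B.map (fun x : ℝ => (x : ℂ)))) : ‖μ‖ ≤ Cst := by
  rw [aux_mem_spec_iff_eigen] at hμ
  obtain ⟨w, hw0, hw⟩ := hμ
  obtain ⟨j0, hj0⟩ : ∃ j, w j ≠ 0 := by
    by_contra h
    push_neg at h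
    exact hw0 (funext h)
  have hne : (Finset.univ : Finset (Fin n)).Nonempty := ⟨j0, Finset.mem_univ _⟩
  obtain ⟨i0, -, hi0⟩ := Finset.exists_max_image Finset.univ
    (fun i => ‖w i‖ / v i) hne
  set t : ℝ := ‖w i0‖ / v i0 with ht
  have htpos : 0 < t := by
    have h1 : ‖w j0‖ / v j0 ≤ t := hi0 j0 (Finset.mem_univ _)
    have h2 : 0 < ‖w j0‖ / v j0 :=
      div_pos (by simpa using hj0) (hv j0)
    linarith
  have hbound : ∀ i, ‖w i‖ ≤ t * v i := by
    intro i
    have := hi0 i (Finset.mem_univ _)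
    rw [div_le_iff₀ (hv i)] at this
    linarith [this]
  have heq : ‖w i0‖ = t * v i0 := by
    rw [ht, div_mul_cancel₀]
    exact (hv i0).ne'
  have hrow : ∑ j, B i0 j * v j = Cst * v i0 := by
    have := congrFun hBv i0
    simpa [Matrix.mulVec, dotProduct] using this
  have hkey : ‖μ‖ * (t * v i0) ≤ t * (Cst * v i0) := by
    calc ‖μ‖ * (t * v i0) = ‖μ * w i0‖ := by
          rw [norm_mul, heq]
      _ = ‖∑ j, (B i0 j : ℂ) * w j‖ := by
          have := congrFun hw i0
          simp only [Matrix.mulVec, dotProduct, Matrix.map, Pi.smul_apply,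
            smul_eq_mul, Matrix.of_apply] at this
          rw [← this]
      _ ≤ ∑ j, ‖(B i0 j : ℂ) * w j‖ := by
          exact norm_sum_le _ _
      _ = ∑ j, B i0 j * ‖w j‖ := by
          apply Finset.sum_congr rfl
          intro j _
          rw [norm_mul, Complex.norm_real, Real.norm_eq_abs, abs_of_nonneg (hB i0 j)]
      _ ≤ ∑ j, B i0 j * (t * v j) := by
          apply Finset.sum_le_sum
          intro j _
          exact mul_le_mul_of_nonneg_left (hbound j) (hB i0 j)
      _ = t * ∑ j, B i0 j * v j := by
          rw [Finset.mul_sum]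
          apply Finset.sum_congr rfl
          intro j _
          ring
      _ = t * (Cst * v i0) := by rw [hrow]
  have hpos : 0 < t * v i0 := mul_pos htpos (hv i0)
  calc ‖μ‖ = ‖μ‖ * (t * v i0) / (t * v i0) := by
        rw [mul_div_assoc, div_self hpos.ne', mul_one]
    _ ≤ t * (Cst * v i0) / (t * v i0) := by
        gcongr
    _ = Cst := by rw [mul_div_mul_left _ _ htpos.ne', mul_div_assoc, div_self (hv i0).ne', mul_one]

private theorem stmt17_aux {n r : ℕ} (hn : 0 < n) (A : Matrix (Fin n) (Fin n) ℝ)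
    (hint : ∀ i j, ∃ z : ℕ, A i j = (z : ℝ))
    (hr : ∀ i, rowSum A i ≠ 0) (hr1 : 1 ≤ r) (k : ℕ)
    (m : Fin n → ZMod r) (hpart : ∀ i j, 0 < A i j → m j = m i + 1)
    (c : ZMod r → ℝ) (hc : ∀ ℓ : ZMod r, 0 < c ℓ)
    (hratio : ∀ i : Fin n, rowSum (A ^ (k + 1)) i / rowSum (A ^ k) i = c (m i)) :
    ∃ z : ℕ, specRad A ^ r = (z : ℝ) := by
  classical
  haveI : NeZero r := ⟨by omega⟩
  have hA0 : ∀ i j, 0 ≤ A i j := fun i j => by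
    obtain ⟨z, hz⟩ := hint i j; rw [hz]; positivity
  have hpow_nat : ∀ s i j, ∃ z : ℕ, (A ^ s) i j = (z : ℝ) := by
    intro s
    induction s with
    | zero =>
      intro i j
      by_cases h : i = j
      · exact ⟨1, by simp [h, Matrix.one_apply]⟩
      · exact ⟨0, by simp [Matrix.one_apply, h]⟩
    | succ s ih =>
      intro i j
      choose g hg using hint i
      choose f hf using fun l => ih l j
      refine ⟨∑ l, g l * f l, ?_⟩
      rw [pow_succ', Matrix.mul_apply]
      push_cast
      exact Finset.sum_congr rfl fun l _ => by rw [hg, hf]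
  have hpow0 : ∀ s i j, 0 ≤ (A ^ s) i j := fun s i j => by
    obtain ⟨z, hz⟩ := hpow_nat s i j; rw [hz]; positivity
  have hrowsum_nat : ∀ s i, ∃ z : ℕ, rowSum (A ^ s) i = (z : ℝ) := by
    intro s i
    choose f hf using fun j => hpow_nat s i j
    refine ⟨∑ j, f j, ?_⟩
    rw [rowSum]
    push_cast
    exact Finset.sum_congr rfl fun j _ => hf j
  have hApos_row : ∀ i, ∃ j, 0 < A i j := by
    intro i
    obtain ⟨j, -, hj⟩ := Finset.exists_ne_zero_of_sum_ne_zero (hr i)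
    exact ⟨j, lt_of_le_of_ne (hA0 i j) (Ne.symm hj)⟩
  have hrec0 : ∀ s i, rowSum (A ^ (s + 1)) i = ∑ j, A i j * rowSum (A ^ s) j := by
    intro s i
    rw [rowSum, pow_succ']
    simp_rw [Matrix.mul_apply]
    rw [Finset.sum_comm]
    simp_rw [rowSum, Finset.mul_sum]
  have hrspos : ∀ s i, 0 < rowSum (A ^ s) i := by
    intro s
    induction s with
    | zero => intro i; rw [pow_zero, rowSum]; simp [Matrix.one_apply]
    | succ s ih =>
      intro i
      rw [hrec0]
      obtain ⟨j, hj⟩ := hApos_row i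
      exact Finset.sum_pos' (fun l _ => mul_nonneg (hA0 i l) (ih l).le)
        ⟨j, Finset.mem_univ j, mul_pos hj (ih j)⟩
  have hstep : ∀ s i, rowSum (A ^ (k + s + 1)) i
      = c (m i + (s : ℕ)) * rowSum (A ^ (k + s)) i := by
    intro s
    induction s with
    | zero =>
      intro i
      have h := (div_eq_iff (hrspos k i).ne').mp (hratio i)
      simpa using h
    | succ s ih =>
      intro i
      have e1 : k + (s + 1) + 1 = (k + s + 1) + 1 := rfl
      rw [e1, hrec0 (k + s + 1) i]
      have e2 : ∀ j, A i j * rowSum (A ^ (k + s + 1)) j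
          = c (m i + ((s : ℕ) + 1 : ℕ)) * (A i j * rowSum (A ^ (k + s)) j) := by
        intro j
        rw [ih j]
        rcases (hA0 i j).eq_or_lt with h | h
        · rw [← h]; ring
        · rw [hpart i j h]
          have : m i + 1 + (s : ℕ) = m i + ((s : ℕ) + 1 : ℕ) := by push_cast; ring
          rw [this]; ring
      rw [Finset.sum_congr rfl (fun j _ => e2 j), ← Finset.mul_sum, ← hrec0 (k + s) i]
      rfl
  have hprodlem : ∀ s i, rowSum (A ^ (k + s)) i
      = (∏ t ∈ Finset.range s, c (m i + (t : ℕ))) * rowSum (A ^ k) i := by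
    intro s
    induction s with
    | zero => intro i; simp
    | succ s ih =>
      intro i
      rw [show k + (s + 1) = (k + s) + 1 from rfl]
      rw [show (k + s) + 1 = k + s + 1 from rfl, hstep s i, ih i,
        Finset.prod_range_succ]
      ring
  have hcyc : ∀ x : ZMod r, (∏ t ∈ Finset.range r, c (x + (t : ℕ))) = ∏ ℓ : ZMod r, c ℓ := by
    intro x
    rw [← Fin.prod_univ_eq_prod_range (fun t => c (x + (t : ℕ))) r]
    have hbij : Function.Bijective (fun t : Fin r => x + ((t : ℕ) : ZMod r)) := by
      have hinj : Function.Injective (fun t : Fin r => x + ((t : ℕ) : ZMod r)) := by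
        intro a b hab
        have := add_left_cancel hab
        have ha := ZMod.val_natCast_of_lt a.isLt
        have hb := ZMod.val_natCast_of_lt b.isLt
        ext
        rw [← ha, ← hb, this]
      exact (Fintype.bijective_iff_injective_and_card _).mpr ⟨hinj, by simp⟩
    exact Fintype.prod_bijective _ hbij _ _ (fun t => rfl)
  set Cst : ℝ := ∏ ℓ : ZMod r, c ℓ with hCst
  have hCpos : 0 < Cst := Finset.prod_pos (fun ℓ _ => hc ℓ)
  have hCpow : ∀ s i, rowSum (A ^ (k + s * r)) i = Cst ^ s * rowSum (A ^ k) i := by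
    intro s i
    rw [hprodlem (s * r) i]
    congr 1
    induction s with
    | zero => simp
    | succ s ih =>
      rw [show (s + 1) * r = s * r + r from by ring, Finset.prod_range_add, ih, pow_succ]
      congr 1
      rw [← hcyc (m i)]
      apply Finset.prod_congr rfl
      intro t _
      congr 1
      push_cast
      rw [ZMod.natCast_self]
      ring
  -- number theory: Cst is a natural number
  obtain ⟨i0⟩ : Nonempty (Fin n) := Fin.pos_iff_nonempty.mp hn
  choose N hN using fun s => hrowsum_nat (k + s * r) i0
  obtain ⟨q0, hq0⟩ := hrowsum_nat k i0
  have hq0pos : 0 < q0 := by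
    have := hrspos k i0
    rw [hq0] at this
    exact_mod_cast this
  have hNval : ∀ s, (N s : ℝ) = Cst ^ s * q0 := by
    intro s
    rw [← hN s, hCpow s i0, hq0]
  have hN0 : N 0 = q0 := by
    have := hNval 0
    simp at this
    exact_mod_cast this
  set p : ℕ := N 1 with hp
  have hpC : (p : ℝ) = Cst * q0 := by rw [hp, hNval 1, pow_one]
  have hrel : ∀ s, N (s + 1) * q0 = N s * p := by
    intro s
    have : ((N (s + 1) * q0 : ℕ) : ℝ) = ((N s * p : ℕ) : ℝ) := by
      push_cast
      rw [hNval (s + 1), hNval s, hpC]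
      ring
    exact_mod_cast this
  set d : ℕ := Nat.gcd p q0 with hd
  have hdpos : 0 < d := Nat.gcd_pos_of_pos_right p hq0pos
  set a : ℕ := p / d with ha
  set b : ℕ := q0 / d with hb
  have hpa : p = d * a := (Nat.mul_div_cancel' (Nat.gcd_dvd_left p q0)).symm
  have hqb : q0 = d * b := (Nat.mul_div_cancel' (Nat.gcd_dvd_right p q0)).symm
  have hcop : Nat.Coprime a b := Nat.coprime_div_gcd_div_gcd hdpos
  have hbpos : 0 < b := by
    rcases Nat.eq_zero_or_pos b with h | h
    · rw [h, mul_zero] at hqb; omega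
    · exact h
  have hrel2 : ∀ s, N (s + 1) * b = N s * a := by
    intro s
    apply Nat.eq_of_mul_eq_mul_left hdpos
    calc d * (N (s + 1) * b) = N (s + 1) * (d * b) := by ring
      _ = N (s + 1) * q0 := by rw [← hqb]
      _ = N s * p := hrel s
      _ = N s * (d * a) := by rw [← hpa]
      _ = d * (N s * a) := by ring
  have hNpow : ∀ s, N s * b ^ s = N 0 * a ^ s := by
    intro s
    induction s with
    | zero => simp
    | succ s ih =>
      calc N (s + 1) * b ^ (s + 1) = (N (s + 1) * b) * b ^ s := by ring
        _ = (N s * a) * b ^ s := by rw [hrel2 s]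
        _ = (N s * b ^ s) * a := by ring
        _ = (N 0 * a ^ s) * a := by rw [ih]
        _ = N 0 * a ^ (s + 1) := by ring
  have hb1 : b = 1 := by
    by_contra hb1
    have hb2 : 2 ≤ b := by omega
    have hdvd : ∀ s, b ^ s ∣ N 0 := by
      intro s
      have h1 : b ^ s ∣ N 0 * a ^ s := ⟨N s, by rw [← hNpow s]; ring⟩
      exact Nat.Coprime.dvd_of_dvd_mul_right (Nat.Coprime.pow s s hcop.symm) h1
    have h2 : b ^ (q0 + 1) ≤ q0 := by
      apply Nat.le_of_dvd hq0pos
      have := hdvd (q0 + 1)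
      rwa [hN0] at this
    have h3 : q0 + 1 ≤ 2 ^ (q0 + 1) := (Nat.lt_two_pow_self).le
    have h4 : 2 ^ (q0 + 1) ≤ b ^ (q0 + 1) := Nat.pow_le_pow_left hb2 _
    omega
  have hCa : Cst = (a : ℝ) := by
    have hq0d : q0 = d := by rw [hqb, hb1, mul_one]
    have hdne : (d:ℝ) ≠ 0 := by
      have : (0:ℝ) < d := by exact_mod_cast hdpos
      linarith
    have h5 : Cst * (d:ℝ) = (a:ℝ) * (d:ℝ) := by
      calc Cst * (d:ℝ) = Cst * (q0:ℝ) := by rw [hq0d]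
        _ = (p:ℝ) := hpC.symm
        _ = ((d * a : ℕ) : ℝ) := by rw [← hpa]
        _ = (a:ℝ) * (d:ℝ) := by push_cast; ring
    exact mul_right_cancel₀ hdne h5
  -- spectral part
  set v : Fin n → ℝ := fun i => rowSum (A ^ k) i with hv
  have hvpos : ∀ i, 0 < v i := fun i => hrspos k i
  set B : Matrix (Fin n) (Fin n) ℝ := A ^ r with hB
  have hB0 : ∀ i j, 0 ≤ B i j := hpow0 r
  have hmulrow : ∀ i, rowSum (A ^ (r + k)) i = ∑ l, B i l * rowSum (A ^ k) l := by
    intro i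
    rw [pow_add, rowSum]
    simp_rw [Matrix.mul_apply]
    rw [Finset.sum_comm]
    simp_rw [rowSum, Finset.mul_sum]
    rfl
  have hBv : B *ᵥ v = Cst • v := by
    funext i
    have h1 : rowSum (A ^ (r + k)) i = Cst * v i := by
      have h2 := hCpow 1 i
      rw [pow_one] at h2
      have e : k + 1 * r = r + k := by ring
      rw [e] at h2
      exact h2
    calc (B *ᵥ v) i = ∑ l, B i l * v l := by simp [Matrix.mulVec, dotProduct]
      _ = rowSum (A ^ (r + k)) i := (hmulrow i).symm
      _ = Cst * v i := h1
      _ = (Cst • v) i := by simp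
  have hvne : v ≠ 0 := by
    intro h
    have h2 := hvpos i0
    rw [h] at h2
    simp at h2
  set Ac := A.map (fun x : ℝ => (x : ℂ)) with hAc
  have hmapow : Ac ^ r = B.map (fun x : ℝ => (x : ℂ)) := by
    have h1 : Ac = Complex.ofRealHom.mapMatrix A := rfl
    rw [h1, ← map_pow, RingHom.mapMatrix_apply]
    rfl
  have hCspec : ((Cst : ℝ) : ℂ) ∈ spectrum ℂ (Ac ^ r) := by
    rw [hmapow]
    exact aux_real_mem_spec B v hvne Cst hBv
  obtain ⟨ζ, hζmem, hζr⟩ := aux_root_of_pow_mem hr1 Ac _ hCspec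
  have habs : ‖ζ‖ ^ r = Cst := by
    rw [← norm_pow, hζr]
    simp [Complex.norm_real, abs_of_pos hCpos]
  have hboundall : ∀ μ ∈ spectrum ℂ Ac, ‖μ‖ ≤ ‖ζ‖ := by
    intro μ hμ
    have h1 := aux_pow_mem_spec Ac μ hμ r
    rw [hmapow] at h1
    have h2 := aux_perron_bound B hB0 v hvpos Cst hBv _ h1
    rw [norm_pow] at h2
    by_contra hlt
    push_neg at hlt
    have h3 : ‖ζ‖ ^ r < ‖μ‖ ^ r :=
      pow_lt_pow_left₀ hlt (norm_nonneg ζ) (by omega)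
    rw [habs] at h3
    linarith
  have hgreat : IsGreatest ((fun μ : ℂ => ‖μ‖) '' spectrum ℂ Ac) (‖ζ‖) :=
    ⟨⟨ζ, hζmem, rfl⟩, by rintro x ⟨μ, hμ, rfl⟩; exact hboundall μ hμ⟩
  refine ⟨a, ?_⟩
  rw [specRad, hgreat.csSup_eq, habs, hCa]

/-- part of Corollary 2 of the paper, cyclic case.
Let `A` be an `n × n` irreducible matrix with nonnegative integer entries and all row sums
nonzero, let `r ≥ 1`, `k ≥ 0`, and let `m : {1,…,n} → ℤ/rℤ` satisfy
`a_{ij} > 0 → m(j) = m(i) + 1`. If positive constants `c_1,…,c_r` satisfy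
`r_i(A^{k+1})/r_i(A^k) = c_{m(i)}` for all `i`, then `ρ(A)^r` is a nonnegative integer. -/
theorem stmt17 {n r : ℕ} (A : Matrix (Fin n) (Fin n) ℝ)
    (hint : ∀ i j, ∃ z : ℕ, A i j = (z : ℝ)) (hirr : IsIrred A)
    (hr : ∀ i, rowSum A i ≠ 0) (hr1 : 1 ≤ r) (k : ℕ)
    (m : Fin n → ZMod r) (hpart : ∀ i j, 0 < A i j → m j = m i + 1)
    (c : ZMod r → ℝ) (hc : ∀ ℓ : ZMod r, 0 < c ℓ)
    (hratio : ∀ i : Fin n, rowSum (A ^ (k + 1)) i / rowSum (A ^ k) i = c (m i)) :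
    ∃ z : ℕ, specRad A ^ r = (z : ℝ) := by
  rcases Nat.eq_zero_or_pos n with h0 | hn
  · subst h0
    refine ⟨0, ?_⟩
    have hempty : spectrum ℂ (A.map (fun x : ℝ => (x : ℂ))) = ∅ := by
      rw [Set.eq_empty_iff_forall_notMem]
      intro μ hμ
      exact (spectrum.mem_iff.mp hμ) (isUnit_of_subsingleton _)
    rw [specRad, hempty, Set.image_empty, Real.sSup_empty]
    rw [zero_pow (by omega : r ≠ 0)]
    simp
  · exact stmt17_aux hn A hint hr hr1 k m hpart c hc hratio
end
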